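/- arXiv:1607.01843 — 6 statements merged into one kernel-verified Lean document; each statement's English description precedes it below -/
import Mathlib

section
/- If h is analytic on the unit disk with h(0)=1, Re h > 0, h(z)=1+∑ c_n z^n, and μ is any complex number, then |c_2 - μ c_1^2| ≤ 2·max{1, |2μ-1|}. -/
open Metric Complex Set

theorem ma_minda_ineq
    (h : ℂ → ℂ) (c : ℕ → ℂ) (μ : ℂ)
    (hh : AnalyticOn ℂ h (ball 0 1))
    (h0 : h 0 = 1)
    (hre : ∀ z ∈ ball (0:ℂ) 1, 0 < (h z).re)
    (hc : ∀ n, c n = iteratedDeriv n h 0 / (n.factorial : ℂ)) :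
    ‖c 2 - μ * c 1 ^ 2‖ ≤ 2 * max 1 ‖2 * μ - 1‖ := by
  have hD : IsOpen (ball (0:ℂ) 1) := isOpen_ball
  have h0m : (0:ℂ) ∈ ball (0:ℂ) 1 := mem_ball_self one_pos
  have hhn : AnalyticOnNhd ℂ h (ball 0 1) := (hD.analyticOn_iff_analyticOnNhd).mp hh
  have hne : ∀ z ∈ ball (0:ℂ) 1, h z + 1 ≠ 0 := by
    intro z hz hzero
    have h1 := hre z hz
    have h2 : (h z + 1).re = 0 := by rw [hzero]; simp
    simp only [Complex.add_re, Complex.one_re] at h2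
    linarith
  set ω : ℂ → ℂ := fun z => (h z - 1) / (h z + 1) with hωdef
  have hωa : AnalyticOnNhd ℂ ω (ball 0 1) :=
    (hhn.sub analyticOnNhd_const).div (hhn.add analyticOnNhd_const) hne
  have hω0 : ω 0 = 0 := by simp [hωdef, h0]
  have hωd : DifferentiableOn ℂ ω (ball 0 1) := hωa.differentiableOn
  -- ω maps the disk into the disk
  have hωmaps : MapsTo ω (ball 0 1) (ball (ω 0) 1) := by
    rw [hω0]
    intro z hz
    have h1 := hne z hz
    have hr := hre z hz
    simp only [mem_ball, dist_zero_right, hωdef, norm_div]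
    rw [div_lt_one (norm_pos_iff.mpr h1)]
    have hsq : normSq (h z - 1) < normSq (h z + 1) := by
      simp only [normSq_apply, Complex.sub_re, Complex.sub_im, Complex.add_re, Complex.add_im,
        Complex.one_re, Complex.one_im]
      nlinarith
    have e1 : ‖h z - 1‖ ^ 2 < ‖h z + 1‖ ^ 2 := by
      rw [Complex.sq_norm, Complex.sq_norm]
      exact hsq
    nlinarith [norm_nonneg (h z - 1), norm_nonneg (h z + 1)]
  -- the dslope function g
  set g : ℂ → ℂ := dslope ω 0 with hgdef
  have hgd : DifferentiableOn ℂ g (ball 0 1) :=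
    (differentiableOn_dslope (hD.mem_nhds h0m)).mpr hωd
  have hgle : ∀ z ∈ ball (0:ℂ) 1, ‖g z‖ ≤ 1 := by
    intro z hz
    have := norm_dslope_le_div_of_mapsTo_ball hωd (hωmaps.mono_right ball_subset_closedBall) hz
    simpa using this
  have hg0 : g 0 = deriv ω 0 := dslope_same ω 0
  -- derivative facts for h
  have hd0 : DifferentiableAt ℂ h 0 := (hhn 0 h0m).differentiableAt
  have hc1 : c 1 = deriv h 0 := by
    rw [hc 1, iteratedDeriv_one]; simp
  have hc2 : c 2 = deriv (deriv h) 0 / 2 := by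
    rw [hc 2]
    have : iteratedDeriv 2 h 0 = deriv (deriv h) 0 := by
      rw [show (2:ℕ) = 1 + 1 from rfl, iteratedDeriv_succ, iteratedDeriv_one]
    rw [this]; norm_num
  -- first derivative of ω at 0
  have hω1 : deriv ω 0 = c 1 / 2 := by
    have := deriv_fun_div (c := fun z => h z - 1) (d := fun z => h z + 1) (x := (0:ℂ))
      (hd0.sub_const 1) (hd0.add_const 1) (hne 0 h0m)
    rw [hωdef]
    rw [this, deriv_sub_const, deriv_add_const]
    simp only [h0, hc1]
    ring
  -- derivative of ω on the ball
  have hωderiv : ∀ z ∈ ball (0:ℂ) 1, deriv ω z = 2 * deriv h z / ((h z + 1) * (h z + 1)) := by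
    intro z hz
    have hdz : DifferentiableAt ℂ h z := (hhn z hz).differentiableAt
    have := deriv_fun_div (c := fun w => h w - 1) (d := fun w => h w + 1) (x := z)
      (hdz.sub_const 1) (hdz.add_const 1) (hne z hz)
    rw [hωdef, this, deriv_sub_const, deriv_add_const]
    have hnz := hne z hz
    beta_reduce
    field_simp
    ring
  have hhderiv_an : AnalyticOnNhd ℂ (deriv h) (ball 0 1) := hhn.deriv
  have hdd0 : DifferentiableAt ℂ (deriv h) 0 := (hhderiv_an 0 h0m).differentiableAt
  have hX : deriv (deriv h) 0 = 2 * c 2 := by rw [hc2]; ring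
  have hω2 : deriv (deriv ω) 0 = c 2 - (c 1)^2 / 2 := by
    have hEq : deriv ω =ᶠ[nhds 0] fun z => 2 * deriv h z / ((h z + 1) * (h z + 1)) :=
      Filter.eventuallyEq_of_mem (hD.mem_nhds h0m) hωderiv
    rw [hEq.deriv_eq]
    have hu : DifferentiableAt ℂ (fun z => 2 * deriv h z) 0 := hdd0.const_mul 2
    have hv0 : ((h 0 + 1) * (h 0 + 1)) ≠ 0 := by rw [h0]; norm_num
    have := deriv_fun_div (c := fun z => 2 * deriv h z) (d := fun z => (h z + 1) * (h z + 1))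
      (x := (0:ℂ)) hu ((hd0.add_const 1).mul (hd0.add_const 1)) hv0
    rw [this, deriv_const_mul 2 hdd0, deriv_fun_mul (hd0.add_const 1) (hd0.add_const 1),
      deriv_add_const]
    beta_reduce
    simp only [h0, hX, ← hc1]
    ring
  -- power series of ω at 0
  obtain ⟨p, hp⟩ := hωa 0 h0m
  have hgp : HasFPowerSeriesAt g p.fslope 0 := hp.has_fpower_series_dslope_fslope
  have hw2 : deriv g 0 = p.coeff 2 := by
    rw [hgp.deriv]
    exact FormalMultilinearSeries.coeff_fslope
  have hp2 : p.coeff 2 = (2 * c 2 - (c 1)^2) / 4 := by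
    obtain ⟨r, hpr⟩ := hp
    have h2 : (2:ℂ) * p.coeff 2 = iteratedDeriv 2 ω 0 := by
      have := hpr.factorial_smul (1:ℂ) 2
      rw [← iteratedDeriv_eq_iteratedFDeriv] at this
      rw [← this]
      have hcoe : (p 2 fun _ => (1:ℂ)) = p.coeff 2 := rfl
      rw [hcoe, nsmul_eq_mul]
      norm_num
    have hiter : iteratedDeriv 2 ω 0 = c 2 - (c 1)^2/2 := by
      rw [show (2:ℕ) = 1+1 from rfl, iteratedDeriv_succ, iteratedDeriv_one]
      exact hω2
    rw [hiter] at h2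
    field_simp
    linear_combination 2 * h2
  -- Schwarz–Pick estimate at the origin
  have hns : ∀ w : ℂ, normSq w = ‖w‖^2 := fun w => by
    rw [Complex.sq_norm]
  have key : ‖deriv g 0‖ ≤ 1 - ‖g 0‖^2 := by
    by_cases hex : ∃ z₀ ∈ ball (0:ℂ) 1, 1 ≤ ‖g z₀‖
    · obtain ⟨z₀, hz₀, hz₀1⟩ := hex
      have heq1 : ‖g z₀‖ = 1 := le_antisymm (hgle z₀ hz₀) hz₀1
      have hmax : IsMaxOn (norm ∘ g) (ball (0:ℂ) 1) z₀ := by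
        intro z hz
        simp only [Function.comp_apply, Set.mem_setOf_eq, heq1]
        exact hgle z hz
      have hconst := eqOn_of_isPreconnected_of_isMaxOn_norm
        (convex_ball (0:ℂ) 1).isPreconnected hD hgd hz₀ hmax
      have hder0 : deriv g 0 = 0 := by
        have heqf : g =ᶠ[nhds 0] fun _ => g z₀ :=
          Filter.eventuallyEq_of_mem (hD.mem_nhds h0m) (fun z hz => hconst hz)
        rw [heqf.deriv_eq, deriv_const]
      have hgg : ‖g 0‖ = 1 := by rw [hconst h0m]; exact heq1
      rw [hder0, norm_zero, hgg]
      norm_num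
    · push_neg at hex
      set a := g 0 with hadef
      have ha : ‖a‖ < 1 := hex 0 h0m
      set φ : ℂ → ℂ := fun z => (g z - a) / (1 - (starRingEnd ℂ) a * g z) with hφdef
      have hden : ∀ z ∈ ball (0:ℂ) 1, (1:ℂ) - (starRingEnd ℂ) a * g z ≠ 0 := by
        intro z hz heq
        have h1 : ‖(starRingEnd ℂ) a * g z‖ < 1 := by
          rw [norm_mul, RCLike.norm_conj]
          nlinarith [norm_nonneg a, norm_nonneg (g z), hex z hz, ha,
            mul_pos (sub_pos.mpr ha) (sub_pos.mpr (hex z hz))]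
        rw [sub_eq_zero] at heq
        rw [← heq] at h1
        simp at h1
      have hφd : DifferentiableOn ℂ φ (ball 0 1) := by
        apply DifferentiableOn.div
        · exact hgd.sub (differentiableOn_const a)
        · exact (differentiableOn_const (1:ℂ)).sub ((differentiableOn_const _).mul hgd)
        · exact hden
      have hφ0 : φ 0 = 0 := by simp [hφdef, ← hadef]
      have hφmaps : MapsTo φ (ball 0 1) (ball (φ 0) 1) := by
        rw [hφ0]
        intro z hz
        have hgz := hex z hz
        have hdz := hden z hz
        simp only [mem_ball, dist_zero_right, hφdef, norm_div]
        rw [div_lt_one (norm_pos_iff.mpr hdz)]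
        have hid : normSq (1 - (starRingEnd ℂ) a * g z) - normSq (g z - a)
            = (1 - normSq a) * (1 - normSq (g z)) := by
          simp only [normSq_apply, Complex.sub_re, Complex.sub_im, Complex.mul_re,
            Complex.mul_im, Complex.one_re, Complex.one_im, Complex.conj_re, Complex.conj_im]
          ring
        have h1 : normSq a < 1 := by rw [hns a]; nlinarith [norm_nonneg a]
        have h2 : normSq (g z) < 1 := by rw [hns (g z)]; nlinarith [norm_nonneg (g z)]
        have key2 : normSq (g z - a) < normSq (1 - (starRingEnd ℂ) a * g z) := by nlinarith
        rw [hns (g z - a), hns (1 - (starRingEnd ℂ) a * g z)] at key2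
        nlinarith [norm_nonneg (g z - a), norm_nonneg (1 - (starRingEnd ℂ) a * g z)]
      have hSch : ‖deriv φ 0‖ ≤ 1 := by
        have := norm_deriv_le_div_of_mapsTo_ball hφd (hφmaps.mono_right ball_subset_closedBall) one_pos
        simpa using this
      have hg0d : DifferentiableAt ℂ g 0 := hgd.differentiableAt (hD.mem_nhds h0m)
      have hd00 : (1:ℂ) - (starRingEnd ℂ) a * g 0 ≠ 0 := hden 0 h0m
      have hdφ : deriv φ 0 = deriv g 0 / (1 - (starRingEnd ℂ) a * a) := by
        have hnum : DifferentiableAt ℂ (fun z => g z - a) 0 := hg0d.sub_const a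
        have hdenom : DifferentiableAt ℂ (fun z => (1:ℂ) - (starRingEnd ℂ) a * g z) 0 :=
          (differentiableAt_const _).sub ((differentiableAt_const _).mul hg0d)
        rw [hφdef, deriv_fun_div hnum hdenom hd00, deriv_sub_const, deriv_const_sub,
          deriv_const_mul _ hg0d]
        beta_reduce
        rw [← hadef]
        have hd0' : (1:ℂ) - (starRingEnd ℂ) a * a ≠ 0 := by rw [hadef]; exact hd00
        field_simp
        ring
      have hval : (1:ℂ) - (starRingEnd ℂ) a * a = ((1 - normSq a : ℝ) : ℂ) := by
        rw [mul_comm, Complex.mul_conj]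
        push_cast
        ring
      have hnv : ‖(1:ℂ) - (starRingEnd ℂ) a * a‖ = 1 - ‖a‖^2 := by
        rw [hval, Complex.norm_real, Real.norm_eq_abs,
          _root_.abs_of_nonneg (by nlinarith [hns a, norm_nonneg a, ha] : (0:ℝ) ≤ 1 - normSq a),
          hns a]
      have : deriv g 0 = deriv φ 0 * ((1:ℂ) - (starRingEnd ℂ) a * a) := by
        rw [hdφ]
        exact (div_mul_cancel₀ _ (by rw [hadef]; exact hd00)).symm
      rw [this, norm_mul, hnv]
      have h1a : (0:ℝ) ≤ 1 - ‖a‖^2 := by nlinarith [norm_nonneg a, ha]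
      nlinarith [mul_le_mul_of_nonneg_right hSch h1a]
  -- translate everything to the coefficients c
  have habs1 : ‖c 1‖ ≤ 2 := by
    have := hgle 0 h0m
    rw [hg0, hω1] at this
    rw [norm_div] at this
    simp only [Complex.norm_two] at this
    linarith [(div_le_one (by norm_num : (0:ℝ) < 2)).mp this]
  have hkey : ‖2 * c 2 - (c 1)^2‖ ≤ 4 - ‖c 1‖^2 := by
    have h1 := key
    rw [hw2, hp2, hg0, hω1] at h1
    rw [norm_div, norm_div] at h1
    simp only [Complex.norm_two] at h1
    have h4 : ‖(4:ℂ)‖ = 4 := by norm_num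
    rw [h4] at h1
    nlinarith [norm_nonneg (c 1)]
  -- final algebra
  set A := ‖c 1‖ with hA
  set s := ‖2*μ - 1‖ with hs
  have hsplit : ‖c 2 - μ * c 1^2‖ ≤ (4 - A^2)/2 + s * A^2/2 := by
    have hrw : c 2 - μ * c 1^2 = (2*c 2 - c 1^2)/2 + (1 - 2*μ) * c 1^2/2 := by ring
    rw [hrw]
    calc ‖(2*c 2 - c 1^2)/2 + (1 - 2*μ) * c 1^2/2‖
        ≤ ‖(2*c 2 - c 1^2)/2‖ + ‖(1 - 2*μ) * c 1^2/2‖ :=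
          norm_add_le _ _
      _ ≤ (4 - A^2)/2 + s * A^2/2 := by
          have h1μ : ‖1 - 2*μ‖ = s := by
            rw [hs]; exact norm_sub_rev 1 (2*μ)
          rw [norm_div, norm_div, norm_mul, norm_pow, h1μ, Complex.norm_two, ← hA]
          linarith [hkey]
  have hM1 : (1:ℝ) ≤ max 1 s := le_max_left 1 s
  have hMs : s ≤ max 1 s := le_max_right 1 s
  have hA0 : 0 ≤ A := norm_nonneg _
  have hs0 : 0 ≤ s := norm_nonneg _
  calc ‖c 2 - μ * c 1^2‖ ≤ (4 - A^2)/2 + s * A^2/2 := hsplit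
    _ ≤ 2 * max 1 s := by
        nlinarith [mul_le_mul_of_nonneg_right hMs (sq_nonneg A),
          mul_nonneg (by linarith : (0:ℝ) ≤ max 1 s - 1) (by nlinarith : (0:ℝ) ≤ 4 - A^2)]
end

section
/- If h is analytic on the unit disk with h(0)=1 and Re h > 0, with Taylor coefficients c_n, then there exists a complex number x with |x| ≤ 1 such that 2c_2 = c_1^2 + x(4 - c_1^2). -/
open Metric Complex Set

/-- If `|a| < 1` and `|u| < 1` then `1 - conj a * u ≠ 0`. -/
lemma moebius_den_ne {a u : ℂ} (ha : ‖a‖ < 1) (hu : ‖u‖ < 1) :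
    1 - (starRingEnd ℂ) a * u ≠ 0 := by
  intro hden
  have h1 : (1 : ℂ) = (starRingEnd ℂ) a * u := by linear_combination hden
  have h2 : ‖(starRingEnd ℂ) a * u‖ = 1 := by rw [← h1]; simp
  rw [norm_mul, Complex.norm_conj] at h2
  nlinarith [norm_nonneg a, norm_nonneg u]

/-- Möbius maps of the disk: if `|a| < 1` and `|u| < 1` then
`|(u - a)/(1 - conj a * u)| < 1`. -/
lemma moebius_lt {a u : ℂ} (ha : ‖a‖ < 1) (hu : ‖u‖ < 1) :
    ‖(u - a) / (1 - (starRingEnd ℂ) a * u)‖ < 1 := by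
  have hden := moebius_den_ne ha hu
  have hdenpos : 0 < ‖1 - (starRingEnd ℂ) a * u‖ :=
    norm_pos_iff.2 hden
  rw [norm_div, div_lt_one hdenpos]
  have hsq : Complex.normSq (u - a) < Complex.normSq (1 - (starRingEnd ℂ) a * u) := by
    have hu' : u.re ^ 2 + u.im ^ 2 < 1 := by
      have := Complex.sq_norm u
      nlinarith [norm_nonneg u, Complex.normSq_apply u]
    have ha' : a.re ^ 2 + a.im ^ 2 < 1 := by
      have := Complex.sq_norm a
      nlinarith [norm_nonneg a, Complex.normSq_apply a]
    simp only [Complex.normSq_apply, Complex.sub_re, Complex.sub_im, Complex.mul_re,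
      Complex.mul_im, Complex.one_re, Complex.one_im, Complex.conj_re, Complex.conj_im]
    nlinarith [sq_nonneg (a.re * u.re - a.im * u.im), sq_nonneg (a.re * u.im + a.im * u.re)]
  have := Real.sqrt_lt_sqrt (Complex.normSq_nonneg _) hsq
  rwa [← Complex.norm_def, ← Complex.norm_def] at this

theorem c2_representation
    (h : ℂ → ℂ) (c : ℕ → ℂ)
    (hh : AnalyticOn ℂ h (ball 0 1))
    (h0 : h 0 = 1)
    (hre : ∀ z ∈ ball (0:ℂ) 1, 0 < (h z).re)
    (hc : ∀ n, c n = iteratedDeriv n h 0 / (n.factorial : ℂ)) :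
    ∃ x : ℂ, ‖x‖ ≤ 1 ∧ 2 * c 2 = c 1 ^ 2 + x * (4 - c 1 ^ 2) := by
  have h0B : (0:ℂ) ∈ ball (0:ℂ) 1 := mem_ball_self one_pos
  have hBopen : IsOpen (ball (0:ℂ) 1) := isOpen_ball
  have hhd : DifferentiableOn ℂ h (ball 0 1) := hh.differentiableOn
  have hne : ∀ z ∈ ball (0:ℂ) 1, h z + 1 ≠ 0 := by
    intro z hz hzero
    have h1 : (h z + 1).re = 0 := by rw [hzero]; simp
    rw [Complex.add_re, Complex.one_re] at h1
    nlinarith [hre z hz]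
  set ω : ℂ → ℂ := fun z => (h z - 1) / (h z + 1) with hωdef
  have hωd : DifferentiableOn ℂ ω (ball 0 1) :=
    (hhd.sub_const 1).div (hhd.add_const 1) hne
  have hω0 : ω 0 = 0 := by simp [hωdef, h0]
  have hωmaps : MapsTo ω (ball (0:ℂ) 1) (ball (0:ℂ) 1) := by
    intro z hz
    rw [mem_ball_zero_iff, hωdef]
    rw [norm_div, div_lt_one (norm_pos_iff.2 (hne z hz))]
    have hsq : Complex.normSq (h z - 1) < Complex.normSq (h z + 1) := by
      simp only [Complex.normSq_apply, Complex.sub_re, Complex.sub_im, Complex.add_re,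
        Complex.add_im, Complex.one_re, Complex.one_im]
      nlinarith [hre z hz]
    have := Real.sqrt_lt_sqrt (Complex.normSq_nonneg _) hsq
    rwa [← Complex.norm_def, ← Complex.norm_def] at this
  set φ : ℂ → ℂ := dslope ω 0 with hφdef
  have hφd : DifferentiableOn ℂ φ (ball 0 1) :=
    (Complex.differentiableOn_dslope (hBopen.mem_nhds h0B)).2 hωd
  have hφle : ∀ z ∈ ball (0:ℂ) 1, ‖φ z‖ ≤ 1 := by
    intro z hz
    have := Complex.norm_dslope_le_div_of_mapsTo_ball hωd (by rw [hω0]; exact hωmaps.mono_right ball_subset_closedBall) hz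
    simpa using this
  -- derivatives of h at 0
  have hdiffat : ∀ z ∈ ball (0:ℂ) 1, DifferentiableAt ℂ h z := fun z hz =>
    hhd.differentiableAt (hBopen.mem_nhds hz)
  have hd0 : DifferentiableAt ℂ h 0 := hdiffat 0 h0B
  have hderivh : AnalyticOnNhd ℂ (deriv h) (ball 0 1) := (hhd.analyticOnNhd hBopen).deriv
  have hd0' : DifferentiableAt ℂ (deriv h) 0 := (hderivh 0 h0B).differentiableAt
  have hc1 : deriv h 0 = c 1 := by rw [hc 1, iteratedDeriv_one]; norm_num
  have hc2 : deriv (deriv h) 0 = 2 * c 2 := by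
    have e : iteratedDeriv 2 h = deriv (deriv h) := by
      rw [iteratedDeriv_succ, iteratedDeriv_one]
    rw [hc 2, e]
    norm_num
    ring
  -- first derivative of ω on the ball
  have hderivω : ∀ z ∈ ball (0:ℂ) 1, deriv ω z = 2 * deriv h z / (h z + 1) ^ 2 := by
    intro z hz
    have hdz := hdiffat z hz
    rw [hωdef]
    rw [deriv_fun_div (hdz.sub_const 1) (hdz.add_const 1) (hne z hz)]
    rw [deriv_sub_const, deriv_add_const]
    ring
  -- second derivative of ω at 0, via h
  have hEq1 : deriv ω =ᶠ[nhds (0:ℂ)] fun z => 2 * deriv h z / (h z + 1) ^ 2 := by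
    filter_upwards [hBopen.mem_nhds h0B] with z hz using hderivω z hz
  have hω2 : deriv (deriv ω) 0 = c 2 - c 1 ^ 2 / 2 := by
    rw [hEq1.deriv_eq]
    rw [deriv_fun_div (d := fun z => (h z + 1) ^ 2) (hd0'.const_mul 2) ((hd0.add_const 1).pow 2)
      (by norm_num [h0])]
    rw [deriv_const_mul 2 hd0']
    rw [deriv_fun_pow (hd0.add_const 1) 2]
    rw [deriv_add_const]
    rw [h0, hc1, hc2]
    norm_num
    ring
  -- second derivative of ω at 0, via φ
  have hωφ : ω = fun z => z * φ z := by
    funext z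
    rcases eq_or_ne z 0 with rfl | hz
    · simp [hω0]
    · rw [hφdef, dslope_of_ne ω hz, slope_def_field, hω0]
      field_simp
      ring
  have hφa : AnalyticOnNhd ℂ φ (ball 0 1) := hφd.analyticOnNhd hBopen
  have hφ0d : DifferentiableAt ℂ φ 0 := (hφa 0 h0B).differentiableAt
  have hφ'd : DifferentiableAt ℂ (deriv φ) 0 := (hφa.deriv 0 h0B).differentiableAt
  have hderivω2 : ∀ z ∈ ball (0:ℂ) 1, deriv ω z = φ z + z * deriv φ z := by
    intro z hz
    have hφz : DifferentiableAt ℂ φ z := (hφa z hz).differentiableAt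
    rw [hωφ, deriv_fun_mul differentiableAt_fun_id hφz]
    simp
  have hEq2 : deriv ω =ᶠ[nhds (0:ℂ)] fun z => φ z + z * deriv φ z := by
    filter_upwards [hBopen.mem_nhds h0B] with z hz using hderivω2 z hz
  have hω2' : deriv (deriv ω) 0 = 2 * deriv φ 0 := by
    rw [hEq2.deriv_eq]
    rw [deriv_fun_add (g := fun z => z * deriv φ z) hφ0d (differentiableAt_fun_id.mul hφ'd)]
    rw [deriv_fun_mul differentiableAt_fun_id hφ'd]
    simp
    ring
  -- values of φ and deriv φ at 0
  have ha0 : φ 0 = c 1 / 2 := by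
    rw [hφdef, dslope_same]
    rw [hderivω 0 h0B, h0, hc1]
    norm_num
    ring
  have hb0 : deriv φ 0 = c 2 / 2 - c 1 ^ 2 / 4 := by
    have h2 : 2 * deriv φ 0 = c 2 - c 1 ^ 2 / 2 := by rw [← hω2', hω2]
    linear_combination h2 / 2
  -- Schwarz–Pick inequality at 0
  have key : ‖deriv φ 0‖ ≤ 1 - ‖φ 0‖ ^ 2 := by
    by_cases hcase : ∀ z ∈ ball (0:ℂ) 1, ‖φ z‖ < 1
    · have ha : ‖φ 0‖ < 1 := hcase 0 h0B
      set a := φ 0 with hadef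
      set ψ : ℂ → ℂ := fun z => (φ z - a) / (1 - (starRingEnd ℂ) a * φ z) with hψdef
      have hdenne : ∀ z ∈ ball (0:ℂ) 1, 1 - (starRingEnd ℂ) a * φ z ≠ 0 := fun z hz =>
        moebius_den_ne ha (hcase z hz)
      have hψd : DifferentiableOn ℂ ψ (ball 0 1) :=
        (hφd.sub_const a).div ((differentiableOn_const 1).sub (hφd.const_mul _)) hdenne
      have hψ0 : ψ 0 = 0 := by rw [hψdef]; simp [← hadef]
      have hψmaps : MapsTo ψ (ball (0:ℂ) 1) (ball (ψ 0) 1) := by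
        rw [hψ0]
        intro z hz
        rw [mem_ball_zero_iff]
        show ‖(φ z - a) / (1 - (starRingEnd ℂ) a * φ z)‖ < 1
        exact moebius_lt ha (hcase z hz)
      have hSch := Complex.norm_deriv_le_div_of_mapsTo_ball hψd (hψmaps.mono_right ball_subset_closedBall) one_pos
      rw [div_one] at hSch
      have hnsq : Complex.normSq a < 1 := by
        rw [← Complex.sq_norm]
        nlinarith [norm_nonneg a]
      have tne : (1 : ℂ) - (Complex.normSq a : ℂ) ≠ 0 :=
        sub_ne_zero.2 (by exact_mod_cast hnsq.ne')
      have hconja : (starRingEnd ℂ) a * a = (Complex.normSq a : ℂ) := by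
        rw [mul_comm, Complex.mul_conj]
      have hψderiv : deriv ψ 0 = deriv φ 0 / (1 - (Complex.normSq a : ℂ)) := by
        rw [hψdef]
        rw [deriv_fun_div (d := fun z => 1 - (starRingEnd ℂ) a * φ z) (hφ0d.sub_const a)
          ((differentiableAt_const 1).sub (hφ0d.const_mul _)) (hdenne 0 h0B)]
        rw [deriv_sub_const, deriv_const_sub, deriv_const_mul _ hφ0d]
        rw [← hadef, hconja]
        field_simp
        ring
      rw [hψderiv, norm_div] at hSch
      have habs : ‖(1:ℂ) - (Complex.normSq a : ℂ)‖ = 1 - Complex.normSq a := by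
        rw [show (1:ℂ) - (Complex.normSq a : ℂ) = ((1 - Complex.normSq a : ℝ) : ℂ) by
          push_cast; ring]
        rw [Complex.norm_real, Real.norm_eq_abs, abs_of_pos (by linarith)]
      rw [habs, div_le_one (by linarith)] at hSch
      calc ‖deriv φ 0‖ ≤ 1 - Complex.normSq a := hSch
        _ = 1 - ‖a‖ ^ 2 := by rw [Complex.sq_norm]
    · push_neg at hcase
      obtain ⟨z₀, hz₀, hz₀1⟩ := hcase
      have heq1 : ‖φ z₀‖ = 1 := le_antisymm (hφle z₀ hz₀) hz₀1
      have hmax : IsMaxOn (norm ∘ φ) (ball (0:ℂ) 1) z₀ := by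
        intro z hz
        simp only [Function.comp_apply, heq1, Set.mem_setOf_eq]
        exact hφle z hz
      have hconst := Complex.eqOn_of_isPreconnected_of_isMaxOn_norm
        (convex_ball (0:ℂ) 1).isPreconnected hBopen hφd hz₀ hmax
      have hev : φ =ᶠ[nhds (0:ℂ)] fun _ => φ z₀ := by
        filter_upwards [hBopen.mem_nhds h0B] with z hz using hconst hz
      have hder0 : deriv φ 0 = 0 := by rw [hev.deriv_eq]; simp
      have habs0 : ‖φ 0‖ = 1 := by
        have := hconst h0B
        simp only [Function.const_apply] at this
        rw [this, heq1]
      rw [hder0, habs0]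
      simp
  -- turn the inequality into the coefficient inequality
  rw [ha0, hb0] at key
  have key2 : ‖2 * c 2 - c 1 ^ 2‖ ≤ 4 - ‖c 1‖ ^ 2 := by
    have e1 : c 2 / 2 - c 1 ^ 2 / 4 = (2 * c 2 - c 1 ^ 2) / 4 := by ring
    rw [e1, norm_div, norm_div] at key
    have h4 : ‖(4:ℂ)‖ = 4 := by norm_num
    have h2 : ‖(2:ℂ)‖ = 2 := by norm_num
    rw [h4, h2] at key
    have := norm_nonneg (c 1)
    nlinarith [key]
  by_cases hc4 : c 1 ^ 2 = (4:ℂ)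
  · refine ⟨0, by simp, ?_⟩
    have habs4 : ‖c 1‖ ^ 2 = 4 := by
      rw [← norm_pow, hc4]; norm_num
    rw [habs4] at key2
    have : ‖2 * c 2 - c 1 ^ 2‖ = 0 :=
      le_antisymm (by linarith) (norm_nonneg _)
    have h0' : 2 * c 2 - c 1 ^ 2 = 0 := by
      rwa [norm_eq_zero] at this
    linear_combination h0'
  · have hden : (4:ℂ) - c 1 ^ 2 ≠ 0 := sub_ne_zero.2 (Ne.symm hc4)
    refine ⟨(2 * c 2 - c 1 ^ 2) / (4 - c 1 ^ 2), ?_, ?_⟩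
    · rw [norm_div, div_le_one (norm_pos_iff.2 hden)]
      have htri : 4 - ‖c 1‖ ^ 2 ≤ ‖4 - c 1 ^ 2‖ := by
        have := norm_sub_norm_le (4:ℂ) (c 1 ^ 2)
        have h4 : ‖(4:ℂ)‖ = 4 := by norm_num
        rw [h4, norm_pow] at this
        exact this
      linarith [key2]
    · field_simp
      ring
end

section
/- Let f be analytic on the unit disk with f(0)=0, f'(0)=1, satisfying Re[(1-z)f'(z)] > 0 for all |z|<1, and let γ_1 be the first logarithmic coefficient, defined by γ_1 = a_2/2 where a_2 is the second Taylor coefficient of f. Then |γ_1| ≤ 3/4, and this bound is sharp. -/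
open Metric Complex

/-- Key lemma (a consequence of the Schwarz lemma): if `p` is differentiable on the unit ball,
`p 0 = 1` and `Re p > 0` there, then `|p'(0)| ≤ 2`. -/
lemma herglotz_deriv_bound {p : ℂ → ℂ} (hp : DifferentiableOn ℂ p (ball 0 1))
    (h0 : p 0 = 1) (hre : ∀ z ∈ ball (0:ℂ) 1, 0 < (p z).re) :
    ‖deriv p 0‖ ≤ 2 := by
  set w : ℂ → ℂ := fun z => (p z - 1) / (p z + 1) with hw
  have hne : ∀ z ∈ ball (0:ℂ) 1, p z + 1 ≠ 0 := by
    intro z hz h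
    have := hre z hz
    have : (p z + 1).re = (p z).re + 1 := by simp
    rw [h] at this
    simp at this
    linarith [hre z hz]
  have hdw : DifferentiableOn ℂ w (ball 0 1) :=
    (hp.sub (differentiableOn_const 1)).div (hp.add (differentiableOn_const 1)) hne
  have hmaps : Set.MapsTo w (ball 0 1) (ball 0 1) := by
    intro z hz
    rw [mem_ball_zero_iff]
    have h1 : ‖p z - 1‖ < ‖p z + 1‖ := by
      apply lt_of_pow_lt_pow_left₀ 2 (norm_nonneg _)
      rw [← Complex.normSq_eq_norm_sq, ← Complex.normSq_eq_norm_sq]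
      simp only [Complex.normSq_apply, Complex.sub_re, Complex.sub_im, Complex.add_re,
        Complex.add_im, Complex.one_re, Complex.one_im]
      nlinarith [hre z hz]
    calc ‖w z‖ = ‖p z - 1‖ / ‖p z + 1‖ := by
          simp [hw, map_div₀]
      _ < 1 := by
          rw [div_lt_one (lt_of_le_of_lt (norm_nonneg _) h1)]
          exact h1
  have hw0 : w 0 = 0 := by simp [hw, h0]
  have hb : ‖deriv w 0‖ ≤ 1 :=
    Complex.norm_deriv_le_one_of_mapsTo_ball hdw (hmaps.mono_right (by rw [hw0]; exact ball_subset_closedBall)) one_pos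
  have hpd : HasDerivAt p (deriv p 0) 0 :=
    ((hp.differentiableAt (isOpen_ball.mem_nhds (by simp))).hasDerivAt)
  have hwd : HasDerivAt w (deriv p 0 / 2) 0 := by
    have := (hpd.sub_const 1).div (hpd.add_const 1) (by rw [h0]; norm_num)
    refine this.congr_deriv ?_
    rw [h0]; ring
  rw [hwd.deriv] at hb
  rw [norm_div] at hb
  simp at hb
  linarith

/-- The extremal function `f(z) = 2z/(1-z) + log(1-z)` (its derivative is `(1+z)/(1-z)²`). -/
noncomputable def F1ext : ℂ → ℂ := fun z => 2 * z / (1 - z) + Complex.log (1 - z)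

lemma F1ext_facts : ∀ z ∈ ball (0:ℂ) 1, (1 - z) ≠ 0 ∧ (1 - z) ∈ Complex.slitPlane := by
  intro z hz
  rw [mem_ball_zero_iff] at hz
  have hre : |z.re| < 1 := lt_of_le_of_lt (Complex.abs_re_le_norm z) hz
  have h2 : (0:ℝ) < (1 - z).re := by
    simp only [Complex.sub_re, Complex.one_re]
    cases abs_lt.1 hre; linarith
  refine ⟨fun h => by simp [h] at h2, Complex.mem_slitPlane_iff.2 (Or.inl h2)⟩

lemma F1ext_hasDerivAt : ∀ z ∈ ball (0:ℂ) 1,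
    HasDerivAt F1ext ((1 + z) / (1 - z)^2) z := by
  intro z hz
  obtain ⟨hne, hsl⟩ := F1ext_facts z hz
  have h1 : HasDerivAt (fun z : ℂ => 1 - z) (-1) z := by
    simpa using (hasDerivAt_id z).const_sub 1
  have h2 : HasDerivAt (fun z : ℂ => 2 * z) 2 z := by
    simpa using (hasDerivAt_id z).const_mul 2
  have h3 : HasDerivAt (fun z : ℂ => 2 * z / (1 - z))
      ((2 * (1 - z) - 2 * z * (-1)) / (1 - z)^2) z := h2.div h1 hne
  have h4 : HasDerivAt (fun z : ℂ => Complex.log (1 - z)) ((-1) / (1 - z)) z :=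
    h1.clog hsl
  have := h3.add h4
  refine this.congr_deriv ?_
  field_simp
  ring

lemma F1ext_analytic : AnalyticOn ℂ F1ext (ball 0 1) := by
  intro z hz
  obtain ⟨hne, hsl⟩ := F1ext_facts z hz
  have h1 : AnalyticAt ℂ (fun z : ℂ => 1 - z) z := analyticAt_const.sub analyticAt_id
  have : AnalyticAt ℂ F1ext z :=
    (((analyticAt_const.mul analyticAt_id).div h1 hne)).add ((analyticAt_clog hsl).comp h1)
  exact this.analyticWithinAt

lemma F1ext_snd_deriv : iteratedDeriv 2 F1ext 0 = 3 := by
  have hev : deriv F1ext =ᶠ[nhds 0] (fun z => (1 + z) / (1 - z)^2) := by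
    filter_upwards [isOpen_ball.mem_nhds (by simp : (0:ℂ) ∈ ball 0 1)] with z hz
    exact (F1ext_hasDerivAt z hz).deriv
  rw [iteratedDeriv_succ, iteratedDeriv_one, hev.deriv_eq]
  have h1 : HasDerivAt (fun z : ℂ => 1 + z) 1 0 := by
    simpa using (hasDerivAt_id (0:ℂ)).const_add 1
  have h0 : HasDerivAt (fun z : ℂ => 1 - z) (-1) 0 := by
    simpa using (hasDerivAt_id (0:ℂ)).const_sub 1
  have h2 : HasDerivAt (fun z : ℂ => (1 - z)^2) (2 * (1 - (0:ℂ))^(2-1) * (-1)) 0 := by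
    exact h0.pow 2
  have h3 := h1.div h2 (by norm_num)
  rw [show deriv (fun z : ℂ => (1 + z) / (1 - z)^2) 0 = _ from h3.deriv]
  norm_num

theorem F1_gamma1 :
    (∀ f : ℂ → ℂ, AnalyticOn ℂ f (ball 0 1) → f 0 = 0 → deriv f 0 = 1 →
      (∀ z ∈ ball (0:ℂ) 1, 0 < ((1 - z) * deriv f z).re) →
      ‖(iteratedDeriv 2 f 0 / 2) / 2‖ ≤ 3/4) ∧
    ∃ f : ℂ → ℂ, AnalyticOn ℂ f (ball 0 1) ∧ f 0 = 0 ∧ deriv f 0 = 1 ∧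
      (∀ z ∈ ball (0:ℂ) 1, 0 < ((1 - z) * deriv f z).re) ∧
      ‖(iteratedDeriv 2 f 0 / 2) / 2‖ = 3/4 := by
  constructor
  · intro f hf h0 h1 hre
    have hf' : AnalyticOnNhd ℂ f (ball 0 1) :=
      (isOpen_ball.analyticOn_iff_analyticOnNhd).1 hf
    have hdf : AnalyticOnNhd ℂ (deriv f) (ball 0 1) := hf'.deriv
    set p : ℂ → ℂ := fun z => (1 - z) * deriv f z with hpdef
    have hp : DifferentiableOn ℂ p (ball 0 1) := by
      intro z hz
      exact (((analyticAt_const.sub analyticAt_id).mul (hdf z hz)).differentiableAt).differentiableWithinAt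
    have hp0 : p 0 = 1 := by simp [hpdef, h1]
    have hb : ‖deriv p 0‖ ≤ 2 := herglotz_deriv_bound hp hp0 hre
    have hdfd : HasDerivAt (deriv f) (deriv (deriv f) 0) 0 :=
      ((hdf 0 (by simp)).differentiableAt).hasDerivAt
    have hpd : HasDerivAt p (-1 + deriv (deriv f) 0) 0 := by
      have h2 : HasDerivAt (fun z : ℂ => 1 - z) (-1) 0 := by
        simpa using (hasDerivAt_id (0:ℂ)).const_sub 1
      have := h2.mul hdfd
      refine this.congr_deriv ?_
      rw [h1]; ring
    have hiter : iteratedDeriv 2 f 0 = deriv (deriv f) 0 := by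
      rw [iteratedDeriv_succ, iteratedDeriv_one]
    have key : deriv (deriv f) 0 = deriv p 0 + 1 := by rw [hpd.deriv]; ring
    rw [hiter, key]
    have h3 : ‖deriv p 0 + 1‖ ≤ 3 :=
      (norm_add_le _ _).trans (by simp; linarith)
    rw [div_div, norm_div]
    rw [show ((2:ℂ)*2) = 4 by norm_num]
    rw [show ‖(4:ℂ)‖ = 4 by norm_num]
    linarith
  · refine ⟨F1ext, F1ext_analytic, by simp [F1ext], ?_, ?_, ?_⟩
    · have := (F1ext_hasDerivAt 0 (by simp)).deriv
      rw [this]; norm_num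
    · intro z hz
      obtain ⟨hne, _⟩ := F1ext_facts z hz
      rw [(F1ext_hasDerivAt z hz).deriv]
      have heq : (1 - z) * ((1 + z) / (1 - z)^2) = (1 + z) / (1 - z) := by
        field_simp
      rw [heq, Complex.div_re]
      rw [← add_div]
      apply div_pos
      · have hz' : ‖z‖ < 1 := by
          exact mem_ball_zero_iff.1 hz
        have : Complex.normSq z < 1 := by
          rw [← Complex.sq_norm] ; nlinarith [norm_nonneg z]
        simp only [Complex.add_re, Complex.add_im, Complex.sub_re, Complex.sub_im,
          Complex.one_re, Complex.one_im, Complex.normSq_apply] at this ⊢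
        nlinarith
      · exact Complex.normSq_pos.2 hne
    · rw [F1ext_snd_deriv]
      norm_num
end

section
/- Let f be analytic on the unit disk with f(0)=0, f'(0)=1, satisfying Re[(1-z)f'(z)] > 0 on the disk, with Taylor coefficients a_n. Then the second logarithmic coefficient γ_2 = (a_3 - a_2^2/2)/2 satisfies |γ_2| ≤ 4/9, and this bound is sharp. -/
open Metric Complex Topology Filter Set


-- Möbius map bound
lemma moebius_abs_le (a w : ℂ) (ha : ‖a‖ < 1) (hw : ‖w‖ ≤ 1) :
    ‖(w - a) / (1 - (starRingEnd ℂ) a * w)‖ ≤ 1 := by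
  have hden : ‖(starRingEnd ℂ) a * w‖ < 1 := by
    rw [norm_mul, Complex.norm_conj]
    calc ‖a‖ * ‖w‖ ≤ ‖a‖ * 1 := by
          exact mul_le_mul_of_nonneg_left hw (norm_nonneg a)
      _ < 1 := by simpa using ha
  have hne : (1 : ℂ) - (starRingEnd ℂ) a * w ≠ 0 := by
    intro h
    have : ‖(starRingEnd ℂ) a * w‖ = 1 := by
      have : (starRingEnd ℂ) a * w = 1 := by linear_combination -h
      simp [this]
    linarith
  rw [norm_div, div_le_one (norm_pos_iff.mpr hne)]
  have h1 : ‖w - a‖ ^ 2 ≤ ‖1 - (starRingEnd ℂ) a * w‖ ^ 2 := by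
    rw [Complex.sq_norm, Complex.sq_norm]
    have hwn : Complex.normSq w ≤ 1 := by
      rw [← Complex.sq_norm]; nlinarith [norm_nonneg w]
    have han : Complex.normSq a < 1 := by
      rw [← Complex.sq_norm]; nlinarith [norm_nonneg a]
    simp only [Complex.normSq_apply, Complex.sub_re, Complex.sub_im, Complex.one_re,
      Complex.one_im, Complex.mul_re, Complex.mul_im, Complex.conj_re, Complex.conj_im] at *
    nlinarith [sq_nonneg (a.re * w.re + a.im * w.im), sq_nonneg (a.re * w.im - a.im * w.re)]
  nlinarith [norm_nonneg (w - a), norm_nonneg (1 - (starRingEnd ℂ) a * w)]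

lemma schwarz_pick_zero {φ : ℂ → ℂ} (hφ : AnalyticOnNhd ℂ φ (ball 0 1))
    (hb : ∀ z ∈ ball (0:ℂ) 1, ‖φ z‖ ≤ 1) :
    ‖deriv φ 0‖ ≤ 1 - ‖φ 0‖ ^ 2 := by
  have h00 : (0:ℂ) ∈ ball (0:ℂ) 1 := mem_ball_self one_pos
  have ha1 : ‖φ 0‖ ≤ 1 := hb 0 h00
  rcases eq_or_lt_of_le ha1 with heq | hlt
  · -- |φ 0| = 1 : constant by maximum modulus
    have hmax : IsLocalMax (norm ∘ φ) 0 := by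
      filter_upwards [isOpen_ball.mem_nhds h00] with z hz
      simpa [← heq] using hb z hz
    have hd : ∀ᶠ z in 𝓝 (0:ℂ), DifferentiableAt ℂ φ z := by
      filter_upwards [isOpen_ball.mem_nhds h00] with z hz
      exact (hφ z hz).differentiableAt
    have hconst : φ =ᶠ[𝓝 (0:ℂ)] (fun _ => φ 0) :=
      Complex.eventually_eq_of_isLocalMax_norm hd hmax
    have hzero : deriv φ 0 = 0 := by
      rw [hconst.deriv_eq]; simp
    rw [hzero, heq]; simp
  · set a := φ 0 with ha
    have hane : ∀ z ∈ ball (0:ℂ) 1, (1:ℂ) - (starRingEnd ℂ) a * φ z ≠ 0 := by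
      intro z hz h
      have h2 : ‖(starRingEnd ℂ) a * φ z‖ = 1 := by
        have : (starRingEnd ℂ) a * φ z = 1 := by linear_combination -h
        simp [this]
      rw [norm_mul, Complex.norm_conj] at h2
      nlinarith [hb z hz, norm_nonneg (φ z), norm_nonneg a]
    set ψ : ℂ → ℂ := fun z => (φ z - a) / (1 - (starRingEnd ℂ) a * φ z) with hψ
    have hψdiff : DifferentiableOn ℂ ψ (ball 0 1) := by
      apply DifferentiableOn.div
      · exact fun z hz => ((hφ z hz).differentiableAt.sub_const a).differentiableWithinAt
      · exact fun z hz => (((hφ z hz).differentiableAt.const_mul _).const_sub 1).differentiableWithinAt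
      · exact hane
    have hψ0 : ψ 0 = 0 := by simp [hψ, ha]
    have hψle : ∀ z ∈ ball (0:ℂ) 1, ‖ψ z‖ ≤ 1 :=
      fun z hz => moebius_abs_le a (φ z) hlt (hb z hz)
    have hkey : ‖deriv ψ 0‖ ≤ 1 := by
      refine le_of_forall_pos_le_add fun ε hε => ?_
      have hmaps : Set.MapsTo ψ (ball 0 1) (ball (ψ 0) (1 + ε)) := by
        intro z hz
        rw [hψ0, mem_ball_zero_iff]
        calc ‖ψ z‖ ≤ 1 := hψle z hz
          _ < 1 + ε := by linarith
      have h2 := Complex.norm_deriv_le_div_of_mapsTo_ball hψdiff (hmaps.mono_right ball_subset_closedBall) one_pos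
      have h3 : (1 + ε)/(1:ℝ) = 1 + ε := by norm_num
      linarith
    -- compute deriv ψ 0
    have hd0 : HasDerivAt φ (deriv φ 0) 0 := (hφ 0 h00).differentiableAt.hasDerivAt
    have hvne : (1:ℂ) - (starRingEnd ℂ) a * a ≠ 0 := hane 0 h00
    have hder : HasDerivAt ψ ((deriv φ 0 * (1 - (starRingEnd ℂ) a * a) -
        (a - a) * (-((starRingEnd ℂ) a * deriv φ 0))) / (1 - (starRingEnd ℂ) a * a) ^ 2) 0 := by
      exact (hd0.sub_const a).div (((hd0.const_mul _)).const_sub 1) hvne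
    have hval : deriv ψ 0 = deriv φ 0 / (1 - (starRingEnd ℂ) a * a) := by
      rw [hder.deriv]
      field_simp
      ring
    have hnorm : ‖1 - (starRingEnd ℂ) a * a‖ = 1 - ‖a‖ ^ 2 := by
      have : (1:ℂ) - (starRingEnd ℂ) a * a = ((1 - Complex.normSq a : ℝ) : ℂ) := by
        rw [mul_comm, Complex.mul_conj]; push_cast; ring
      rw [this, Complex.norm_real, Real.norm_eq_abs, abs_of_pos]
      · rw [Complex.sq_norm]
      · rw [← Complex.sq_norm]; nlinarith [norm_nonneg a]
    rw [hval, norm_div, hnorm] at hkey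
    have hpos : 0 < 1 - ‖a‖ ^ 2 := by nlinarith [norm_nonneg a]
    calc ‖deriv φ 0‖ = (‖deriv φ 0‖ / (1 - ‖a‖ ^ 2)) * (1 - ‖a‖ ^ 2) := by
          field_simp
      _ ≤ 1 * (1 - ‖a‖ ^ 2) := by
          exact mul_le_mul_of_nonneg_right hkey hpos.le
      _ = 1 - ‖a‖ ^ 2 := one_mul _

lemma gamma2_calc (b0 b1 : ℂ) (h0 : ‖b0‖ ≤ 1)
    (h1 : ‖b1‖ ≤ 1 - ‖b0‖ ^ 2) :
    ‖(2*(1+2*b0+2*b1+2*b0^2)/6 - ((1+2*b0)/2)^2/2)/2‖ ≤ 4/9 := by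
  have he : (2*(1+2*b0+2*b1+2*b0^2)/6 - ((1+2*b0)/2)^2/2)/2
      = (5 + 4*b0 + 4*b0^2 + 16*b1)/48 := by ring
  rw [he, norm_div]
  have h48 : ‖(48:ℂ)‖ = 48 := by
    rw [show (48:ℂ) = ((48:ℝ):ℂ) by norm_num, Complex.norm_real, Real.norm_eq_abs]; norm_num
  rw [h48, div_le_iff₀ (by norm_num : (0:ℝ) < 48)]
  have htri : ‖5 + 4*b0 + 4*b0^2 + 16*b1‖
      ≤ 5 + 4*‖b0‖ + 4*‖b0‖^2 + 16*‖b1‖ := by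
    calc ‖5 + 4*b0 + 4*b0^2 + 16*b1‖
        ≤ ‖5 + 4*b0 + 4*b0^2‖ + ‖16*b1‖ := norm_add_le _ _
      _ ≤ (‖5 + 4*b0‖ + ‖4*b0^2‖) + ‖16*b1‖ := by
          gcongr; exact norm_add_le _ _
      _ ≤ ((‖(5:ℂ)‖ + ‖4*b0‖) + ‖4*b0^2‖) + ‖16*b1‖ := by
          gcongr; exact norm_add_le _ _
      _ = 5 + 4*‖b0‖ + 4*‖b0‖^2 + 16*‖b1‖ := by
          simp [norm_mul, norm_pow, Complex.norm_ofNat]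
  nlinarith [sq_nonneg (6*‖b0‖ - 1), norm_nonneg b0, norm_nonneg b1, htri]

lemma F1_bound (f : ℂ → ℂ) (hf : AnalyticOn ℂ f (ball 0 1)) (hf0 : f 0 = 0) (hf1 : deriv f 0 = 1)
    (hre : ∀ z ∈ ball (0:ℂ) 1, 0 < ((1 - z) * deriv f z).re) :
    ‖(iteratedDeriv 3 f 0 / 6 - (iteratedDeriv 2 f 0 / 2) ^ 2 / 2) / 2‖ ≤ 4/9 := by
  have h00 : (0:ℂ) ∈ ball (0:ℂ) 1 := mem_ball_self one_pos
  have hfn : AnalyticOnNhd ℂ f (ball 0 1) := isOpen_ball.analyticOn_iff_analyticOnNhd.mp hf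
  have hdf : AnalyticOnNhd ℂ (deriv f) (ball 0 1) := hfn.deriv
  set p : ℂ → ℂ := fun z => (1 - z) * deriv f z with hpdef
  have hpan : AnalyticOnNhd ℂ p (ball 0 1) :=
    fun z hz => (analyticAt_const.sub analyticAt_id).mul (hdf z hz)
  have hp0 : p 0 = 1 := by simp [hpdef, hf1]
  have hp1ne : ∀ z ∈ ball (0:ℂ) 1, p z + 1 ≠ 0 := by
    intro z hz h
    have h2 : (p z).re + 1 = 0 := by
      have := congrArg Complex.re h; simpa using this
    linarith [hre z hz]
  set ω : ℂ → ℂ := fun z => (p z - 1) / (p z + 1) with hωdef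
  have hωan : AnalyticOnNhd ℂ ω (ball 0 1) :=
    fun z hz => ((hpan z hz).sub analyticAt_const).div ((hpan z hz).add analyticAt_const)
      (hp1ne z hz)
  have hω0 : ω 0 = 0 := by simp [hωdef, hp0]
  have hωlt : ∀ z ∈ ball (0:ℂ) 1, ‖ω z‖ < 1 := by
    intro z hz
    rw [hωdef]
    simp only [norm_div]
    rw [div_lt_one (norm_pos_iff.mpr (hp1ne z hz))]
    have hsq : ‖p z - 1‖ ^ 2 < ‖p z + 1‖ ^ 2 := by
      rw [Complex.sq_norm, Complex.sq_norm]
      simp only [Complex.normSq_apply, Complex.sub_re, Complex.sub_im, Complex.add_re,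
        Complex.add_im, Complex.one_re, Complex.one_im]
      nlinarith [hre z hz]
    nlinarith [norm_nonneg (p z - 1), norm_nonneg (p z + 1)]
  set φ : ℂ → ℂ := dslope ω 0 with hφdef
  have hωdiff : DifferentiableOn ℂ ω (ball 0 1) :=
    fun z hz => (hωan z hz).differentiableAt.differentiableWithinAt
  have hφdiff : DifferentiableOn ℂ φ (ball 0 1) :=
    (Complex.differentiableOn_dslope (isOpen_ball.mem_nhds h00)).mpr hωdiff
  have hmaps : MapsTo ω (ball 0 1) (ball (ω 0) 1) := by
    intro w hw; rw [hω0]; exact mem_ball_zero_iff.mpr (hωlt w hw)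
  have hφle : ∀ z ∈ ball (0:ℂ) 1, ‖φ z‖ ≤ 1 := by
    intro z hz
    have := Complex.norm_dslope_le_div_of_mapsTo_ball hωdiff (hmaps.mono_right ball_subset_closedBall) hz
    simpa [hφdef] using this
  have hφan : AnalyticOnNhd ℂ φ (ball 0 1) := by
    intro z hz
    rcases eq_or_ne z 0 with rfl | hzne
    · obtain ⟨q, hq⟩ := hωan 0 h00
      exact hq.has_fpower_series_dslope_fslope.analyticAt
    · have h1 : AnalyticAt ℂ (fun w => (w - 0)⁻¹ • (ω w - ω 0)) z :=
        ((analyticAt_id.sub analyticAt_const).inv (by simpa using hzne)).smul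
          ((hωan z hz).sub analyticAt_const)
      apply h1.congr
      filter_upwards [compl_singleton_mem_nhds hzne] with w hw
      rw [hφdef, dslope_of_ne _ (by simpa using hw), slope_def_module]
  -- coefficients
  have h0le : ‖φ 0‖ ≤ 1 := hφle 0 h00
  have h1le : ‖deriv φ 0‖ ≤ 1 - ‖φ 0‖ ^ 2 :=
    schwarz_pick_zero hφan hφle
  -- identities
  have hωeq : ∀ z : ℂ, ω z = z * φ z := by
    intro z
    have := sub_smul_dslope ω 0 z
    rw [hω0, sub_zero, sub_zero, smul_eq_mul] at this
    exact this.symm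
  have hden1 : ∀ z ∈ ball (0:ℂ) 1, (1:ℂ) - z * φ z ≠ 0 := by
    intro z hz h
    have h2 : z * φ z = 1 := by linear_combination -h
    have := hωlt z hz
    rw [hωeq z, h2] at this
    simp at this
  have hden2 : ∀ z ∈ ball (0:ℂ) 1, (1:ℂ) - z ≠ 0 := by
    intro z hz h
    have h2 : z = 1 := by linear_combination -h
    rw [h2] at hz
    simp at hz
  have hderiv_eq : ∀ z ∈ ball (0:ℂ) 1,
      deriv f z = (1 + z * φ z) / ((1 - z * φ z) * (1 - z)) := by
    intro z hz
    have h1 : ω z * (p z + 1) = p z - 1 := div_mul_cancel₀ _ (hp1ne z hz)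
    rw [hωeq z] at h1
    rw [eq_div_iff (mul_ne_zero (hden1 z hz) (hden2 z hz))]
    have hpz2 : p z = (1 - z) * deriv f z := rfl
    rw [hpz2] at h1
    linear_combination -h1
  set Q0 : ℂ → ℂ := fun z => (1 + z * φ z) / ((1 - z * φ z) * (1 - z)) with hQ0def
  have heq0 : deriv f =ᶠ[𝓝 (0:ℂ)] Q0 := by
    filter_upwards [isOpen_ball.mem_nhds h00] with z hz using hderiv_eq z hz
  set Q1 : ℂ → ℂ := fun z =>
      ((1 * φ z + z * deriv φ z) * ((1 - z * φ z) * (1 - z)) -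
        (1 + z * φ z) * (-(1 * φ z + z * deriv φ z) * (1 - z) + (1 - z * φ z) * -1)) /
      ((1 - z * φ z) * (1 - z)) ^ 2 with hQ1def
  have hQ01 : ∀ z ∈ ball (0:ℂ) 1, HasDerivAt Q0 (Q1 z) z := by
    intro z hz
    have hφz : HasDerivAt φ (deriv φ z) z := (hφan z hz).differentiableAt.hasDerivAt
    have hzφ : HasDerivAt (fun w => w * φ w) (1 * φ z + z * deriv φ z) z :=
      (hasDerivAt_id z).mul hφz
    have hu : HasDerivAt (fun w => 1 + w * φ w) (1 * φ z + z * deriv φ z) z := hzφ.const_add 1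
    have hb1 : HasDerivAt (fun w => 1 - w * φ w) (-(1 * φ z + z * deriv φ z)) z := hzφ.const_sub 1
    have hb2 : HasDerivAt (fun w => 1 - w) (-1 : ℂ) z := by
      simpa using (hasDerivAt_id z).const_sub (1:ℂ)
    have hv : HasDerivAt (fun w => (1 - w * φ w) * (1 - w))
        (-(1 * φ z + z * deriv φ z) * (1 - z) + (1 - z * φ z) * -1) z := hb1.mul hb2
    exact hu.div hv (mul_ne_zero (hden1 z hz) (hden2 z hz))
  have h2nd : iteratedDeriv 2 f 0 = 1 + 2 * φ 0 := by
    rw [iteratedDeriv_succ, iteratedDeriv_one]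
    rw [heq0.deriv_eq, (hQ01 0 h00).deriv]
    rw [hQ1def]
    norm_num
    ring
  have heq1 : deriv (deriv f) =ᶠ[𝓝 (0:ℂ)] Q1 := by
    refine heq0.deriv.trans ?_
    filter_upwards [isOpen_ball.mem_nhds h00] with z hz using (hQ01 z hz).deriv
  have h3rd : iteratedDeriv 3 f 0 = 2 * (1 + 2 * φ 0 + 2 * deriv φ 0 + 2 * (φ 0)^2) := by
    rw [show (3:ℕ) = 2 + 1 from rfl, iteratedDeriv_succ, iteratedDeriv_succ, iteratedDeriv_one]
    rw [heq1.deriv_eq]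
    -- compute deriv Q1 0
    have hφ0d : HasDerivAt φ (deriv φ 0) 0 := (hφan 0 h00).differentiableAt.hasDerivAt
    have hdφ0d : HasDerivAt (deriv φ) (deriv (deriv φ) 0) 0 :=
      (hφan.deriv 0 h00).differentiableAt.hasDerivAt
    have hA : HasDerivAt (fun z => 1 * φ z + z * deriv φ z)
        (1 * deriv φ 0 + (1 * deriv φ 0 + 0 * deriv (deriv φ) 0)) 0 :=
      (hφ0d.const_mul 1).add ((hasDerivAt_id 0).mul hdφ0d)
    have hzφ : HasDerivAt (fun z => z * φ z) (1 * φ 0 + 0 * deriv φ 0) 0 :=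
      (hasDerivAt_id 0).mul hφ0d
    have hb1 : HasDerivAt (fun z => 1 - z * φ z) (-(1 * φ 0 + 0 * deriv φ 0)) 0 := hzφ.const_sub 1
    have hb2 : HasDerivAt (fun z : ℂ => 1 - z) (-1 : ℂ) 0 := by
      simpa using (hasDerivAt_id (0:ℂ)).const_sub (1:ℂ)
    have hB : HasDerivAt (fun z => (1 - z * φ z) * (1 - z))
        (-(1 * φ 0 + 0 * deriv φ 0) * (1 - 0) + (1 - 0 * φ 0) * -1) 0 := hb1.mul hb2
    have hu : HasDerivAt (fun z => 1 + z * φ z) (1 * φ 0 + 0 * deriv φ 0) 0 := hzφ.const_add 1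
    have hC1 : HasDerivAt (fun z => -(1 * φ z + z * deriv φ z) * (1 - z))
        (-(1 * deriv φ 0 + (1 * deriv φ 0 + 0 * deriv (deriv φ) 0)) * (1 - 0) +
          -(1 * φ 0 + 0 * deriv φ 0) * -1) 0 := hA.neg.mul hb2
    have hC2 : HasDerivAt (fun z => (1 - z * φ z) * -1) (-(1 * φ 0 + 0 * deriv φ 0) * -1) 0 :=
      hb1.mul_const (-1)
    have hC := hC1.add hC2
    have hN := (hA.mul hB).sub (hu.mul hC)
    have hD := hB.pow 2
    have hD0 : ((1 - (0:ℂ) * φ 0) * (1 - 0)) ^ 2 ≠ 0 := by norm_num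
    have hfin := (hN.div hD hD0).deriv
    rw [hQ1def]
    rw [show (fun z =>
      ((1 * φ z + z * deriv φ z) * ((1 - z * φ z) * (1 - z)) -
        (1 + z * φ z) * (-(1 * φ z + z * deriv φ z) * (1 - z) + (1 - z * φ z) * -1)) /
      ((1 - z * φ z) * (1 - z)) ^ 2) = (fun z =>
      ((1 * φ z + z * deriv φ z) * ((1 - z * φ z) * (1 - z)) -
        (1 + z * φ z) * (-(1 * φ z + z * deriv φ z) * (1 - z) + (1 - z * φ z) * -1)) /
      (((1 - z * φ z) * (1 - z)) ^ 2)) from rfl]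
    refine Eq.trans hfin ?_
    norm_num
    ring
  rw [h3rd, h2nd]
  exact gamma2_calc (φ 0) (deriv φ 0) h0le h1le

noncomputable def wf : ℂ → ℂ := fun z =>
  7/6 * (1 - z)⁻¹ + 7/12 * Complex.log (1 - z) + 5/12 * Complex.log (1 + z) - 7/6

noncomputable def wF1 : ℂ → ℂ := fun z =>
  7/6 * ((1 - z)^2)⁻¹ - 7/12 * (1 - z)⁻¹ + 5/12 * (1 + z)⁻¹

noncomputable def wF2 : ℂ → ℂ := fun z =>
  7/3 * ((1 - z)^3)⁻¹ - 7/12 * ((1 - z)^2)⁻¹ - 5/12 * ((1 + z)^2)⁻¹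

lemma wball (z : ℂ) (hz : z ∈ ball (0:ℂ) 1) :
    (1:ℂ) - z ≠ 0 ∧ (1:ℂ) + z ≠ 0 ∧ (1 - z) ∈ Complex.slitPlane ∧ (1 + z) ∈ Complex.slitPlane := by
  rw [mem_ball_zero_iff] at hz
  have hre : |z.re| < 1 := lt_of_le_of_lt (Complex.abs_re_le_norm z) hz
  rw [abs_lt] at hre
  refine ⟨?_, ?_, ?_, ?_⟩
  · intro h
    have : z.re = 1 := by
      have := congrArg Complex.re h; simp at this; linarith [this]
    linarith
  · intro h
    have : z.re = -1 := by
      have := congrArg Complex.re h; simp at this; linarith [this]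
    linarith
  · exact Complex.mem_slitPlane_iff.mpr (Or.inl (by simp; linarith))
  · exact Complex.mem_slitPlane_iff.mpr (Or.inl (by simp; linarith))

lemma wf_hasDeriv (z : ℂ) (hz : z ∈ ball (0:ℂ) 1) : HasDerivAt wf (wF1 z) z := by
  obtain ⟨h1, h2, h3, h4⟩ := wball z hz
  have hb2 : HasDerivAt (fun w : ℂ => 1 - w) (-1 : ℂ) z := by
    simpa using (hasDerivAt_id z).const_sub (1:ℂ)
  have hb3 : HasDerivAt (fun w : ℂ => 1 + w) (1 : ℂ) z := by
    simpa using (hasDerivAt_id z).const_add (1:ℂ)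
  have hinv : HasDerivAt (fun w : ℂ => (1 - w)⁻¹) (-(-1) / (1 - z)^2) z := hb2.inv h1
  have hlog1 : HasDerivAt (fun w : ℂ => Complex.log (1 - w)) ((-1) / (1 - z)) z := hb2.clog h3
  have hlog2 : HasDerivAt (fun w : ℂ => Complex.log (1 + w)) (1 / (1 + z)) z := hb3.clog h4
  have hsum := (((hinv.const_mul (7/6 : ℂ)).add (hlog1.const_mul (7/12 : ℂ))).add
      (hlog2.const_mul (5/12 : ℂ))).sub_const (7/6 : ℂ)
  have heq : 7/6 * (-(-1) / (1 - z)^2) + 7/12 * ((-1) / (1 - z)) + 5/12 * (1 / (1 + z))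
      = wF1 z := by
    rw [wF1]; field_simp; ring
  rw [heq] at hsum
  exact hsum

lemma wF1_hasDeriv (z : ℂ) (hz : z ∈ ball (0:ℂ) 1) : HasDerivAt wF1 (wF2 z) z := by
  obtain ⟨h1, h2, h3, h4⟩ := wball z hz
  have hb2 : HasDerivAt (fun w : ℂ => 1 - w) (-1 : ℂ) z := by
    simpa using (hasDerivAt_id z).const_sub (1:ℂ)
  have hb3 : HasDerivAt (fun w : ℂ => 1 + w) (1 : ℂ) z := by
    simpa using (hasDerivAt_id z).const_add (1:ℂ)
  have hp2 : HasDerivAt (fun w : ℂ => (1 - w)^2) (2 * (1 - z)^1 * (-1)) z := hb2.pow 2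
  have hp3 : HasDerivAt (fun w : ℂ => (1 + w)^2) (2 * (1 + z)^1 * 1) z := hb3.pow 2
  have hi1 : HasDerivAt (fun w : ℂ => ((1 - w)^2)⁻¹)
      (-(2 * (1 - z)^1 * (-1)) / ((1 - z)^2)^2) z := hp2.inv (pow_ne_zero 2 h1)
  have hi2 : HasDerivAt (fun w : ℂ => (1 - w)⁻¹) (-(-1) / (1 - z)^2) z := hb2.inv h1
  have hi3 : HasDerivAt (fun w : ℂ => (1 + w)⁻¹) (-1 / (1 + z)^2) z := by
    exact hb3.inv h2
  have hsum := ((hi1.const_mul (7/6 : ℂ)).sub (hi2.const_mul (7/12 : ℂ))).add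
      (hi3.const_mul (5/12 : ℂ))
  have e1 : -(2 * (1 - z)^1 * (-1)) / ((1 - z)^2)^2 = 2 * ((1 - z)^3)⁻¹ := by
    field_simp
  have e2 : -(-1) / (1 - z)^2 = ((1 - z)^2)⁻¹ := by rw [neg_neg, one_div]
  have e3 : (-1 : ℂ) / (1 + z)^2 = -((1 + z)^2)⁻¹ := by
    rw [neg_div, one_div]
  have heq : 7/6 * (-(2 * (1 - z)^1 * (-1)) / ((1 - z)^2)^2) - 7/12 * (-(-1) / (1 - z)^2)
      + 5/12 * (-1 / (1 + z)^2) = wF2 z := by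
    rw [e1, e2, e3, wF2]; ring
  rw [heq] at hsum
  exact hsum

lemma wF2_deriv0 : deriv wF2 0 = 20/3 := by
  have h1 : (1:ℂ) - 0 ≠ 0 := by norm_num
  have h2 : (1:ℂ) + 0 ≠ 0 := by norm_num
  have hb2 : HasDerivAt (fun w : ℂ => 1 - w) (-1 : ℂ) 0 := by
    simpa using (hasDerivAt_id (0:ℂ)).const_sub (1:ℂ)
  have hb3 : HasDerivAt (fun w : ℂ => 1 + w) (1 : ℂ) 0 := by
    simpa using (hasDerivAt_id (0:ℂ)).const_add (1:ℂ)
  have hp3 : HasDerivAt (fun w : ℂ => (1 - w)^3) (3 * (1 - (0:ℂ))^2 * (-1)) 0 := hb2.pow 3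
  have hp2 : HasDerivAt (fun w : ℂ => (1 - w)^2) (2 * (1 - (0:ℂ))^1 * (-1)) 0 := hb2.pow 2
  have hq2 : HasDerivAt (fun w : ℂ => (1 + w)^2) (2 * (1 + (0:ℂ))^1 * 1) 0 := hb3.pow 2
  have hi1 : HasDerivAt (fun w : ℂ => ((1 - w)^3)⁻¹)
      (-(3 * (1 - (0:ℂ))^2 * (-1)) / ((1 - (0:ℂ))^3)^2) 0 := hp3.inv (pow_ne_zero 3 h1)
  have hi2 : HasDerivAt (fun w : ℂ => ((1 - w)^2)⁻¹)
      (-(2 * (1 - (0:ℂ))^1 * (-1)) / ((1 - (0:ℂ))^2)^2) 0 := hp2.inv (pow_ne_zero 2 h1)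
  have hi3 : HasDerivAt (fun w : ℂ => ((1 + w)^2)⁻¹)
      (-(2 * (1 + (0:ℂ))^1 * 1) / ((1 + (0:ℂ))^2)^2) 0 := hq2.inv (pow_ne_zero 2 h2)
  have hsum := ((hi1.const_mul (7/3 : ℂ)).sub (hi2.const_mul (7/12 : ℂ))).sub
      (hi3.const_mul (5/12 : ℂ))
  have := hsum.deriv
  refine Eq.trans this ?_
  norm_num

lemma wf_analytic : AnalyticOnNhd ℂ wf (ball 0 1) := by
  intro z hz
  obtain ⟨h1, h2, h3, h4⟩ := wball z hz
  have a1 : AnalyticAt ℂ (fun w : ℂ => 1 - w) z := analyticAt_const.sub analyticAt_id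
  have a2 : AnalyticAt ℂ (fun w : ℂ => 1 + w) z := analyticAt_const.add analyticAt_id
  unfold wf
  exact (((analyticAt_const.mul (a1.inv h1)).add
      (analyticAt_const.mul (a1.clog h3))).add
      (analyticAt_const.mul (a2.clog h4))).sub analyticAt_const

lemma wf_zero : wf 0 = 0 := by
  simp [wf, Complex.log_one]

lemma wf_deriv0 : deriv wf 0 = 1 := by
  rw [(wf_hasDeriv 0 (mem_ball_self one_pos)).deriv]
  norm_num [wF1]

lemma wf_re (z : ℂ) (hz : z ∈ ball (0:ℂ) 1) : 0 < ((1 - z) * deriv wf z).re := by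
  obtain ⟨h1, h2, h3, h4⟩ := wball z hz
  rw [(wf_hasDeriv z hz).deriv]
  have hne : (3:ℂ)*((1-z)*(1+z)) ≠ 0 := mul_ne_zero (by norm_num) (mul_ne_zero h1 h2)
  have hrat : (1 - z) * wF1 z = (3*z*z + z + 3) / (3*((1-z)*(1+z))) := by
    rw [wF1, eq_div_iff hne]
    have ha2 : ((1-z)^2)⁻¹ * (1-z)^2 = 1 := inv_mul_cancel₀ (pow_ne_zero 2 h1)
    have ha : (1-z)⁻¹ * (1-z) = 1 := inv_mul_cancel₀ h1
    have hb : (1+z)⁻¹ * (1+z) = 1 := inv_mul_cancel₀ h2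
    linear_combination (7/2*(1+z)) * ha2 + (-(7/4)*(1-z)*(1+z)) * ha + (5/4*(1-z)^2) * hb
  rw [hrat, Complex.div_re, ← add_div]
  have hs : z.re^2 + z.im^2 < 1 := by
    rw [mem_ball_zero_iff] at hz
    have h5 := Complex.sq_norm z
    rw [Complex.normSq_apply] at h5
    have h6 : ‖z‖ < 1 := hz
    nlinarith [norm_nonneg z]
  apply div_pos
  · simp only [Complex.add_re, Complex.add_im, Complex.mul_re, Complex.mul_im, Complex.sub_re,
      Complex.sub_im, Complex.one_re, Complex.one_im, Complex.re_ofNat, Complex.im_ofNat]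
    have h5 : z.re^2 < 1 := by nlinarith [sq_nonneg z.im]
    have h6 : (0:ℝ) < 1 - (z.re^2 + z.im^2) := by linarith
    have h7 : (0:ℝ) < z.re + 3*(1 + (z.re^2 + z.im^2)) := by nlinarith [sq_nonneg (z.re + 1), sq_nonneg z.im]
    nlinarith [mul_pos h6 h7]
  · exact Complex.normSq_pos.mpr (by
      exact mul_ne_zero (by norm_num) (mul_ne_zero h1 h2))

lemma wf_id2 : iteratedDeriv 2 wf 0 = 4/3 := by
  have h00 : (0:ℂ) ∈ ball (0:ℂ) 1 := mem_ball_self one_pos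
  have heq0 : deriv wf =ᶠ[𝓝 (0:ℂ)] wF1 := by
    filter_upwards [isOpen_ball.mem_nhds h00] with z hz using (wf_hasDeriv z hz).deriv
  rw [iteratedDeriv_succ, iteratedDeriv_one, heq0.deriv_eq, (wF1_hasDeriv 0 h00).deriv]
  norm_num [wF2]

lemma wf_id3 : iteratedDeriv 3 wf 0 = 20/3 := by
  have h00 : (0:ℂ) ∈ ball (0:ℂ) 1 := mem_ball_self one_pos
  have heq0 : deriv wf =ᶠ[𝓝 (0:ℂ)] wF1 := by
    filter_upwards [isOpen_ball.mem_nhds h00] with z hz using (wf_hasDeriv z hz).deriv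
  have heq1 : deriv (deriv wf) =ᶠ[𝓝 (0:ℂ)] wF2 := by
    refine heq0.deriv.trans ?_
    filter_upwards [isOpen_ball.mem_nhds h00] with z hz using (wF1_hasDeriv z hz).deriv
  rw [show (3:ℕ) = 2 + 1 from rfl, iteratedDeriv_succ, iteratedDeriv_succ, iteratedDeriv_one,
    heq1.deriv_eq, wF2_deriv0]


theorem F1_gamma2 :
    (∀ f : ℂ → ℂ, AnalyticOn ℂ f (ball 0 1) → f 0 = 0 → deriv f 0 = 1 →
      (∀ z ∈ ball (0:ℂ) 1, 0 < ((1 - z) * deriv f z).re) →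
      ‖(iteratedDeriv 3 f 0 / 6 - (iteratedDeriv 2 f 0 / 2) ^ 2 / 2) / 2‖ ≤ 4/9) ∧
    ∃ f : ℂ → ℂ, AnalyticOn ℂ f (ball 0 1) ∧ f 0 = 0 ∧ deriv f 0 = 1 ∧
      (∀ z ∈ ball (0:ℂ) 1, 0 < ((1 - z) * deriv f z).re) ∧
      ‖(iteratedDeriv 3 f 0 / 6 - (iteratedDeriv 2 f 0 / 2) ^ 2 / 2) / 2‖ = 4/9 := by
  constructor
  · exact fun f hf h0 h1 hre => F1_bound f hf h0 h1 hre
  · refine ⟨wf, wf_analytic.analyticOn, wf_zero, wf_deriv0, wf_re, ?_⟩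
    rw [wf_id3, wf_id2]
    have h : ((20/3:ℂ)/6 - ((4/3:ℂ)/2)^2/2)/2 = 4/9 := by norm_num
    rw [h, show (4/9:ℂ) = ((4/9:ℝ):ℂ) by norm_num, Complex.norm_real, Real.norm_eq_abs]
    norm_num
end

section
/- Let f be analytic on the unit disk with f(0)=0, f'(0)=1, satisfying Re[(1-z+z^2)f'(z)] > 0 for all |z|<1. Then γ_1 = a_2/2 satisfies |γ_1| ≤ 3/4, and the bound is sharp. -/
open Metric Complex

/-! Auxiliary lemmas -/

private lemma normSq_lt_one_of_mem_ball {z : ℂ} (hz : z ∈ ball (0:ℂ) 1) :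
    Complex.normSq z < 1 := by
  have h : ‖z‖ < 1 := by simpa using mem_ball_zero_iff.mp hz
  have h0 : 0 ≤ ‖z‖ := norm_nonneg z
  rw [← Complex.sq_norm]; nlinarith

private lemma slit1 {z : ℂ} (hz : z ∈ ball (0:ℂ) 1) : (1 - z) ∈ Complex.slitPlane := by
  have h := normSq_lt_one_of_mem_ball hz
  rw [Complex.normSq_apply] at h
  exact Or.inl (by simp only [Complex.sub_re, Complex.one_re]; nlinarith [sq_nonneg z.im])

private lemma slit2 {z : ℂ} (hz : z ∈ ball (0:ℂ) 1) :
    (1 - z + z ^ 2) ∈ Complex.slitPlane := by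
  have h := normSq_lt_one_of_mem_ball hz
  rw [Complex.normSq_apply] at h
  set x := z.re; set y := z.im
  rw [Complex.mem_slitPlane_iff]
  have hre : (1 - z + z ^ 2).re = 1 - x + (x * x - y * y) := by
    simp [Complex.add_re, Complex.sub_re, Complex.one_re, pow_two, Complex.mul_re]
    rfl
  have him : (1 - z + z ^ 2).im = -y + (x * y + y * x) := by
    simp [Complex.add_im, Complex.sub_im, Complex.one_im, pow_two, Complex.mul_im]
    rfl
  rw [hre, him]
  by_cases hy : -y + (x * y + y * x) = 0
  · left
    have hfac : y * (2 * x - 1) = 0 := by linarith [hy]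
    rcases mul_eq_zero.mp hfac with h0 | h0
    · nlinarith [sq_nonneg (2 * x - 1)]
    · have hx : x = 1 / 2 := by linarith
      nlinarith
  · exact Or.inr hy

/-- The extremal function. -/
noncomputable def fext : ℂ → ℂ :=
  fun z => -2 * Complex.log (1 - z) + Complex.log (1 - z + z ^ 2)

/-- Its derivative. -/
noncomputable def Fext : ℂ → ℂ :=
  fun z => 2 * (1 - z)⁻¹ + (2 * z - 1) * (1 - z + z ^ 2)⁻¹

private lemma hasDerivAt_fext {z : ℂ} (hz : z ∈ ball (0:ℂ) 1) :
    HasDerivAt fext (Fext z) z := by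
  have hs1 := slit1 hz
  have hs2 := slit2 hz
  have hne1 : (1 : ℂ) - z ≠ 0 := Complex.slitPlane_ne_zero hs1
  have hne2 : (1 : ℂ) - z + z ^ 2 ≠ 0 := Complex.slitPlane_ne_zero hs2
  have hinner1 : HasDerivAt (fun w : ℂ => 1 - w) (-1) z := (hasDerivAt_id z).const_sub 1
  have hinner2 : HasDerivAt (fun w : ℂ => 1 - w + w ^ 2) (-1 + 2 * z) z := by
    have := hinner1.fun_add (hasDerivAt_pow 2 z)
    exact this.congr_deriv (by norm_num)
  have h1 : HasDerivAt (fun w => Complex.log (1 - w)) ((1 - z)⁻¹ * (-1)) z :=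
    (Complex.hasDerivAt_log hs1).comp z hinner1
  have h2 : HasDerivAt (fun w => Complex.log (1 - w + w ^ 2))
      ((1 - z + z ^ 2)⁻¹ * (-1 + 2 * z)) z := by
    have := (Complex.hasDerivAt_log hs2).comp z hinner2; exact this
  have h := (h1.const_mul (-2)).add h2
  have hval : -2 * ((1 - z)⁻¹ * (-1)) + (1 - z + z ^ 2)⁻¹ * (-1 + 2 * z) = Fext z := by
    unfold Fext; ring
  rw [hval] at h
  exact h

theorem F3_gamma1 :
    (∀ f : ℂ → ℂ, AnalyticOn ℂ f (ball 0 1) → f 0 = 0 → deriv f 0 = 1 →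
      (∀ z ∈ ball (0:ℂ) 1, 0 < ((1 - z + z^2) * deriv f z).re) →
      ‖(iteratedDeriv 2 f 0 / 2) / 2‖ ≤ 3/4) ∧
    ∃ f : ℂ → ℂ, AnalyticOn ℂ f (ball 0 1) ∧ f 0 = 0 ∧ deriv f 0 = 1 ∧
      (∀ z ∈ ball (0:ℂ) 1, 0 < ((1 - z + z^2) * deriv f z).re) ∧
      ‖(iteratedDeriv 2 f 0 / 2) / 2‖ = 3/4 := by
  have hball : (0:ℂ) ∈ ball (0:ℂ) 1 := by simp
  constructor
  · -- the bound
    intro f hf h0 h1 hre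
    have hfn : AnalyticOnNhd ℂ f (ball 0 1) :=
      (isOpen_ball.analyticOn_iff_analyticOnNhd).mp hf
    have hdf : AnalyticOnNhd ℂ (deriv f) (ball 0 1) := hfn.deriv
    set p : ℂ → ℂ := fun z => (1 - z + z ^ 2) * deriv f z with hp_def
    have hrep : ∀ z ∈ ball (0:ℂ) 1, 0 < (p z).re := by
      intro z hz; simpa [hp_def] using hre z hz
    have hpd : DifferentiableOn ℂ p (ball 0 1) := by
      intro z hz
      exact ((((differentiableAt_const (1:ℂ)).sub differentiableAt_id).add
        (differentiableAt_id.pow 2)).mul (hdf z hz).differentiableAt).differentiableWithinAt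
    have hpne : ∀ z ∈ ball (0:ℂ) 1, p z + 1 ≠ 0 := by
      intro z hz h
      have h2 : (p z + 1).re = 0 := by rw [h]; simp
      rw [Complex.add_re, Complex.one_re] at h2
      have := hrep z hz; linarith
    set w : ℂ → ℂ := fun z => (p z - 1) / (p z + 1) with hw_def
    have hp0 : p 0 = 1 := by simp [hp_def, h1]
    have hw0 : w 0 = 0 := by simp [hw_def, hp0]
    have hwd : DifferentiableOn ℂ w (ball 0 1) :=
      (hpd.sub_const 1).div (hpd.add_const 1) hpne
    have hmaps : Set.MapsTo w (ball (0:ℂ) 1) (ball (0:ℂ) 1) := by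
      intro z hz
      rw [mem_ball_zero_iff]
      have hlt : Complex.normSq (p z - 1) < Complex.normSq (p z + 1) := by
        have := hrep z hz
        simp only [Complex.normSq_apply, Complex.add_re, Complex.add_im, Complex.sub_re,
          Complex.sub_im, Complex.one_re, Complex.one_im]
        nlinarith
      have habs : ‖p z - 1‖ < ‖p z + 1‖ := by
        rw [Complex.norm_def, Complex.norm_def]
        exact Real.sqrt_lt_sqrt (Complex.normSq_nonneg _) hlt
      have hposd : 0 < ‖p z + 1‖ :=
        norm_pos_iff.mpr (hpne z hz)
      rw [hw_def]
      simp only [norm_div]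
      rw [div_lt_one hposd]
      exact habs
    have hschwarz : ‖deriv w 0‖ ≤ 1 := by
      have := Complex.norm_deriv_le_one_of_mapsTo_ball hwd
        (by rw [hw0]; exact hmaps.mono_right ball_subset_closedBall) one_pos
      exact this
    have hpda : DifferentiableAt ℂ p 0 :=
      (hpd.differentiableAt (isOpen_ball.mem_nhds hball))
    have hpa : HasDerivAt p (deriv p 0) 0 := hpda.hasDerivAt
    have hwderiv : deriv w 0 = deriv p 0 / 2 := by
      have hw : HasDerivAt w ((deriv p 0 * (p 0 + 1) - (p 0 - 1) * deriv p 0) / (p 0 + 1) ^ 2)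
          0 := (hpa.sub_const 1).div (hpa.add_const 1) (hpne 0 hball)
      rw [hw.deriv, hp0]
      ring
    have hdp : ‖deriv p 0‖ ≤ 2 := by
      rw [hwderiv] at hschwarz
      rw [norm_div] at hschwarz
      have h2 : ‖(2:ℂ)‖ = 2 := by norm_num
      rw [h2, div_le_one (by norm_num)] at hschwarz
      exact hschwarz
    have hdfa : HasDerivAt (deriv f) (deriv (deriv f) 0) 0 :=
      ((hdf 0 hball).differentiableAt).hasDerivAt
    have hq : HasDerivAt (fun z : ℂ => 1 - z + z ^ 2) (-1) 0 := by
      have := ((hasDerivAt_id (0:ℂ)).const_sub 1).fun_add (hasDerivAt_pow 2 (0:ℂ))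
      exact this.congr_deriv (by norm_num)
    have hpp : HasDerivAt p (-1 + deriv (deriv f) 0) 0 := by
      have := hq.fun_mul hdfa
      exact this.congr_deriv (by simp [h1])
    have hD : deriv (deriv f) 0 = deriv p 0 + 1 := by
      have := hpp.deriv
      rw [this]; ring
    have hiter : iteratedDeriv 2 f 0 = deriv (deriv f) 0 := by
      rw [iteratedDeriv_succ, iteratedDeriv_one]
    rw [hiter, hD]
    have habsD : ‖deriv p 0 + 1‖ ≤ 3 := by
      calc ‖deriv p 0 + 1‖ ≤ ‖deriv p 0‖ + ‖(1:ℂ)‖ :=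
            norm_add_le _ _
        _ ≤ 2 + 1 := by rw [norm_one]; linarith
        _ = 3 := by norm_num
    rw [norm_div, norm_div]
    have h2 : ‖(2:ℂ)‖ = 2 := by norm_num
    rw [h2]
    linarith
  · -- sharpness
    refine ⟨fext, ?_, ?_, ?_, ?_, ?_⟩
    · -- analytic
      apply DifferentiableOn.analyticOn _ isOpen_ball
      exact fun z hz => (hasDerivAt_fext hz).differentiableAt.differentiableWithinAt
    · -- f 0 = 0
      unfold fext; simp
    · -- deriv f 0 = 1
      have := (hasDerivAt_fext hball).deriv
      rw [this]; unfold Fext; norm_num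
    · -- positivity
      intro z hz
      have hne1 : (1 : ℂ) - z ≠ 0 := Complex.slitPlane_ne_zero (slit1 hz)
      have hne2 : (1 : ℂ) - z + z ^ 2 ≠ 0 := Complex.slitPlane_ne_zero (slit2 hz)
      rw [(hasDerivAt_fext hz).deriv]
      have hkey : (1 - z + z ^ 2) * Fext z = (1 + z) / (1 - z) := by
        unfold Fext; field_simp; ring
      rw [hkey, Complex.div_re]
      rw [← add_div]
      apply div_pos
      · have h := normSq_lt_one_of_mem_ball hz
        rw [Complex.normSq_apply] at h
        simp only [Complex.add_re, Complex.add_im, Complex.sub_re, Complex.sub_im,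
          Complex.one_re, Complex.one_im]
        nlinarith
      · exact Complex.normSq_pos.mpr hne1
    · -- second derivative value
      have h2 : iteratedDeriv 2 fext 0 = 3 := by
        rw [iteratedDeriv_succ, iteratedDeriv_one]
        have heq : deriv fext =ᶠ[nhds 0] Fext :=
          Filter.eventuallyEq_of_mem (isOpen_ball.mem_nhds hball)
            (fun z hz => (hasDerivAt_fext hz).deriv)
        rw [heq.deriv_eq]
        have hinner1 : HasDerivAt (fun w : ℂ => 1 - w) (-1) 0 := (hasDerivAt_id 0).const_sub 1
        have hinner2 : HasDerivAt (fun w : ℂ => 1 - w + w ^ 2) (-1) 0 := by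
          have := hinner1.fun_add (hasDerivAt_pow 2 0)
          exact this.congr_deriv (by norm_num)
        have hne1 : (fun w : ℂ => 1 - w) 0 ≠ 0 := by norm_num
        have hne2 : (fun w : ℂ => 1 - w + w ^ 2) 0 ≠ 0 := by norm_num
        have hd1 := (hinner1.inv hne1).const_mul (2 : ℂ)
        have hd2 := (((hasDerivAt_id 0).const_mul (2:ℂ)).sub_const 1).mul (hinner2.inv hne2)
        have h := hd1.add hd2
        have : deriv Fext 0 = _ := h.deriv
        rw [this]; norm_num
      rw [h2]
      have : ((3:ℂ)/2/2) = ((3/4 : ℝ) : ℂ) := by norm_num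
      rw [this, Complex.norm_real]; norm_num
end

section
/- If f is starlike (f analytic and univalent on the unit disk, f(0)=0, f'(0)=1, Re(z f'(z)/f(z)) > 0 on the disk), then its logarithmic coefficients satisfy |γ_n| ≤ 1/n for all n ≥ 1. -/
open Metric Complex MeasureTheory intervalIntegral

lemma my_intervalIntegral_conj {f : ℝ → ℂ} {a b : ℝ} :
    ∫ x in a..b, (starRingEnd ℂ) (f x) = (starRingEnd ℂ) (∫ x in a..b, f x) := by
  simp [intervalIntegral, ← integral_conj]

lemma my_intervalIntegral_re {f : ℝ → ℂ} {a b : ℝ} (hf : IntervalIntegrable f volume a b) :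
    ∫ x in a..b, (f x).re = (∫ x in a..b, f x).re := by
  have h1 := integral_re hf.1
  have h2 := integral_re hf.2
  simp only [RCLike.re_to_complex] at h1 h2
  simp [intervalIntegral, Complex.sub_re, h1, h2]

lemma carath_aux {q : ℂ → ℂ} (hq : DifferentiableOn ℂ q (ball 0 1)) (hq0 : q 0 = 1)
    (hre : ∀ z ∈ ball (0:ℂ) 1, 0 ≤ (q z).re) {n : ℕ} (hn : 1 ≤ n) {r : ℝ}
    (hr0 : 0 < r) (hr1 : r < 1) :
    ‖iteratedDeriv n q 0‖ * r ^ n ≤ 2 * n.factorial := by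
  have hrne : (r:ℂ) ≠ 0 := by exact_mod_cast hr0.ne'
  have hsub : closedBall (0:ℂ) r ⊆ ball 0 1 := by
    intro z hz
    simp only [mem_closedBall, mem_ball] at *
    exact hz.trans_lt hr1
  have hmem : ∀ θ : ℝ, circleMap 0 r θ ∈ ball (0:ℂ) 1 := by
    intro θ
    simp only [mem_ball, dist_zero_right, norm_circleMap_zero]
    rw [abs_of_pos hr0]
    exact hr1
  have hqc : DifferentiableOn ℂ q (closedBall 0 r) := hq.mono hsub
  have hcont : Continuous fun θ : ℝ => q (circleMap 0 r θ) :=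
    hq.continuousOn.comp_continuous (continuous_circleMap 0 r) hmem
  have hdiff : ∀ z ∈ ball (0:ℂ) r \ (∅ : Set ℂ), DifferentiableAt ℂ q z := by
    intro z hz
    exact hq.differentiableAt (isOpen_ball.mem_nhds (hsub (ball_subset_closedBall hz.1)))
  -- power series
  have hps : HasFPowerSeriesOnBall q (cauchyPowerSeries q 0 r) 0 r.toNNReal := by
    have hqc' : DifferentiableOn ℂ q (closedBall 0 (r.toNNReal : ℝ)) := by
      rwa [Real.coe_toNNReal r hr0.le]
    have h := hqc'.hasFPowerSeriesOnBall (R := r.toNNReal) (by simpa using hr0)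
    rwa [Real.coe_toNNReal r hr0.le] at h
  set cn : ℂ := cauchyPowerSeries q 0 r n (fun _ => 1) with hcn
  have hitd : iteratedDeriv n q 0 = (n.factorial : ℂ) * cn := by
    rw [iteratedDeriv_eq_iteratedFDeriv, ← hps.factorial_smul 1 n]
    simp [hcn, nsmul_eq_mul]
  -- A
  set A : ℂ := ∫ θ in (0:ℝ)..(2*Real.pi), Complex.exp (-(n*θ*I)) * q (circleMap 0 r θ) with hAdef
  have hA : A = 2 * Real.pi * r ^ n * cn := by
    have h1 : (∮ z in C(0, r), ((1:ℂ)/(z-0))^n • (z-0)⁻¹ • q z) = (I * ((r:ℂ)^n)⁻¹) * A := by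
      rw [hAdef, circleIntegral, ← intervalIntegral.integral_const_mul]
      congr 1
      ext θ
      rw [deriv_circleMap]
      have hcm : circleMap 0 r θ = r * Complex.exp (θ * I) := circleMap_zero r θ
      have h3 : Complex.exp (-((n:ℂ) * θ * I)) = (Complex.exp (θ*I)^n)⁻¹ := by
        rw [← Complex.exp_nat_mul, ← Complex.exp_neg]; ring_nf
      simp only [smul_eq_mul, sub_zero]
      rw [hcm, h3]
      have hexpne : Complex.exp ((θ:ℂ) * I) ≠ 0 := Complex.exp_ne_zero _
      field_simp
      have e1 : (r:ℂ)^n * ((r:ℂ)⁻¹)^n = 1 := by rw [← mul_pow, mul_inv_cancel₀ hrne, one_pow]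
      have e2 : Complex.exp ((θ:ℂ) * I)^n * (Complex.exp ((θ:ℂ) * I))⁻¹^n = 1 := by
        rw [← mul_pow, mul_inv_cancel₀ hexpne, one_pow]
      linear_combination (Complex.exp ((θ:ℂ) * I)^n * (Complex.exp ((θ:ℂ) * I))⁻¹^n * q (r * Complex.exp (θ * I))) * e1 + q (r * Complex.exp (θ * I)) * e2
    have h2 := cauchyPowerSeries_apply q 0 r n 1
    rw [h1] at h2
    rw [← hcn] at h2
    rw [h2]
    have hπ : (Real.pi : ℂ) ≠ 0 := by exact_mod_cast Real.pi_ne_zero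
    field_simp
    have e1 : (r:ℂ)^n * ((r:ℂ)⁻¹)^n = 1 := by rw [← mul_pow, mul_inv_cancel₀ hrne, one_pow]
    have eπ : (Real.pi:ℂ) * (Real.pi:ℂ)⁻¹ = 1 := mul_inv_cancel₀ hπ
    have eI : I * I⁻¹ = 1 := mul_inv_cancel₀ I_ne_zero
    linear_combination (-A) * eπ + (-A * ((Real.pi:ℂ) * (Real.pi:ℂ)⁻¹)) * e1 + (-A * ((Real.pi:ℂ) * (Real.pi:ℂ)⁻¹) * ((r:ℂ)^n * ((r:ℂ)⁻¹)^n)) * eI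
  -- B
  have hB : (∫ θ in (0:ℝ)..(2*Real.pi), Complex.exp ((n:ℂ)*θ*I) * q (circleMap 0 r θ)) = 0 := by
    obtain ⟨m, rfl⟩ : ∃ m, n = m + 1 := ⟨n - 1, (Nat.succ_pred_eq_of_pos hn).symm⟩
    have hz : (∮ z in C(0, r), z ^ m * q z) = 0 :=
      circleIntegral_eq_zero_of_differentiable_on_off_countable hr0.le Set.countable_empty
        ((continuousOn_pow m).mul hqc.continuousOn)
        (fun z hz => (differentiableAt_pow m).mul (hdiff z hz))
    have h1 : (∮ z in C(0, r), z ^ m * q z)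
        = (I * (r:ℂ)^(m+1)) * ∫ θ in (0:ℝ)..(2*Real.pi),
            Complex.exp (((m:ℂ)+1)*θ*I) * q (circleMap 0 r θ) := by
      rw [circleIntegral, ← intervalIntegral.integral_const_mul]
      congr 1
      ext θ
      rw [deriv_circleMap]
      have hcm : circleMap 0 r θ = r * Complex.exp (θ * I) := circleMap_zero r θ
      have h3 : Complex.exp (((m:ℂ)+1) * θ * I) = Complex.exp (θ*I)^(m+1) := by
        rw [← Complex.exp_nat_mul]; push_cast; ring_nf
      simp only [smul_eq_mul]
      rw [hcm, h3]
      ring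
    rw [h1] at hz
    have : (I * (r:ℂ)^(m+1)) ≠ 0 := mul_ne_zero I_ne_zero (pow_ne_zero _ hrne)
    have := (mul_eq_zero.mp hz).resolve_left this
    push_cast
    exact this
  -- C
  have hC : (∫ θ in (0:ℝ)..(2*Real.pi), q (circleMap 0 r θ)) = 2 * Real.pi := by
    have hz := circleIntegral_sub_inv_smul_of_differentiable_on_off_countable
      Set.countable_empty (mem_ball_self hr0) hqc.continuousOn hdiff (w := 0)
    have h1 : (∮ z in C(0, r), (z - 0)⁻¹ • q z)
        = I * ∫ θ in (0:ℝ)..(2*Real.pi), q (circleMap 0 r θ) := by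
      rw [circleIntegral, ← intervalIntegral.integral_const_mul]
      congr 1
      ext θ
      rw [deriv_circleMap]
      have hne : circleMap 0 r θ ≠ 0 := circleMap_ne_center hr0.ne'
      simp only [smul_eq_mul, sub_zero]
      field_simp
    rw [h1, hq0, smul_eq_mul, mul_one] at hz
    have h2 : (I : ℂ) * (∫ θ in (0:ℝ)..(2*Real.pi), q (circleMap 0 r θ)) = I * (2*(Real.pi:ℂ)) := by
      rw [hz]; ring
    have h3 := mul_left_cancel₀ I_ne_zero h2
    rw [h3]
  -- integrability
  have hce : Continuous fun θ : ℝ => Complex.exp (-((n:ℂ)*θ*I)) := by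
    apply Complex.continuous_exp.comp
    exact (((continuous_const.mul Complex.continuous_ofReal).mul continuous_const).neg)
  have hint1 : IntervalIntegrable (fun θ : ℝ => Complex.exp (-((n:ℂ)*θ*I)) * q (circleMap 0 r θ))
      volume 0 (2*Real.pi) := (hce.mul hcont).intervalIntegrable _ _
  have hint2 : IntervalIntegrable
      (fun θ : ℝ => Complex.exp (-((n:ℂ)*θ*I)) * (starRingEnd ℂ) (q (circleMap 0 r θ)))
      volume 0 (2*Real.pi) := (hce.mul (Complex.continuous_conj.comp hcont)).intervalIntegrable _ _
  -- conj of B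
  have hconjB : (∫ θ in (0:ℝ)..(2*Real.pi),
      Complex.exp (-((n:ℂ)*θ*I)) * (starRingEnd ℂ) (q (circleMap 0 r θ))) = 0 := by
    have heq : (fun θ : ℝ => Complex.exp (-((n:ℂ)*θ*I)) * (starRingEnd ℂ) (q (circleMap 0 r θ)))
        = fun θ : ℝ => (starRingEnd ℂ) (Complex.exp ((n:ℂ)*θ*I) * q (circleMap 0 r θ)) := by
      funext θ
      rw [map_mul, ← Complex.exp_conj]
      congr 2
      simp [Complex.conj_ofReal]
    rw [heq, my_intervalIntegral_conj, hB, map_zero]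
  -- A as integral against 2 Re q
  have hsum : A = ∫ θ in (0:ℝ)..(2*Real.pi),
      Complex.exp (-((n:ℂ)*θ*I)) * ((2 * (q (circleMap 0 r θ)).re : ℝ) : ℂ) := by
    have h0 : A = A + (∫ θ in (0:ℝ)..(2*Real.pi),
        Complex.exp (-((n:ℂ)*θ*I)) * (starRingEnd ℂ) (q (circleMap 0 r θ))) := by
      rw [hconjB, add_zero]
    rw [h0, hAdef, ← intervalIntegral.integral_add hint1 hint2]
    congr 1
    funext θ
    rw [← mul_add, Complex.add_conj]
  -- norm bound
  have hnorm : ‖A‖ ≤ ∫ θ in (0:ℝ)..(2*Real.pi), 2 * (q (circleMap 0 r θ)).re := by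
    rw [hsum]
    refine (intervalIntegral.norm_integral_le_integral_norm Real.two_pi_pos.le).trans_eq ?_
    congr 1
    funext θ
    rw [norm_mul]
    have h1 : ‖Complex.exp (-((n:ℂ)*θ*I))‖ = 1 := by
      rw [Complex.norm_exp]
      simp
    have h2 : (0:ℝ) ≤ 2 * (q (circleMap 0 r θ)).re := by
      have := hre _ (hmem θ)
      linarith
    rw [h1, one_mul, Complex.norm_real, Real.norm_eq_abs, _root_.abs_of_nonneg h2]
  -- evaluate the Re integral
  have hCre : (∫ θ in (0:ℝ)..(2*Real.pi), 2 * (q (circleMap 0 r θ)).re) = 2 * (2 * Real.pi) := by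
    rw [intervalIntegral.integral_const_mul, my_intervalIntegral_re (hcont.intervalIntegrable _ _),
      hC]
    simp
  have habsA : ‖A‖ = 2 * Real.pi * r ^ n * ‖cn‖ := by
    rw [hA]
    simp [norm_mul, norm_pow, Complex.norm_real, abs_of_pos Real.pi_pos, abs_of_pos hr0,
      Complex.norm_two]
  have hkey : ‖cn‖ * r ^ n ≤ 2 := by
    rw [hCre] at hnorm
    rw [habsA] at hnorm
    have hπ := Real.pi_pos
    nlinarith
  have habsitd : ‖iteratedDeriv n q 0‖ = n.factorial * ‖cn‖ := by
    rw [hitd, norm_mul, Complex.norm_natCast]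
  rw [habsitd]
  calc (n.factorial : ℝ) * ‖cn‖ * r ^ n
      = (n.factorial : ℝ) * (‖cn‖ * r ^ n) := by ring
    _ ≤ (n.factorial : ℝ) * 2 := by
        exact mul_le_mul_of_nonneg_left hkey (by positivity)
    _ = 2 * n.factorial := by ring

lemma carath {q : ℂ → ℂ} (hq : DifferentiableOn ℂ q (ball 0 1)) (hq0 : q 0 = 1)
    (hre : ∀ z ∈ ball (0:ℂ) 1, 0 ≤ (q z).re) {n : ℕ} (hn : 1 ≤ n) :
    ‖iteratedDeriv n q 0‖ ≤ 2 * n.factorial := by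
  have ht : Filter.Tendsto (fun r : ℝ => ‖iteratedDeriv n q 0‖ * r ^ n)
      (nhdsWithin 1 (Set.Iio 1)) (nhds (‖iteratedDeriv n q 0‖ * 1 ^ n)) :=
    ((continuous_const.mul (continuous_pow n)).tendsto 1).mono_left nhdsWithin_le_nhds
  have hev : ∀ᶠ r in nhdsWithin (1:ℝ) (Set.Iio 1),
      ‖iteratedDeriv n q 0‖ * r ^ n ≤ 2 * n.factorial := by
    filter_upwards [Ioo_mem_nhdsLT_of_mem (Set.mem_Ioc.mpr ⟨zero_lt_one, le_refl (1:ℝ)⟩)]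
      with r hr
    exact carath_aux hq hq0 hre hn hr.1 hr.2
  have := le_of_tendsto ht hev
  simpa using this

lemma itdw_open {f : ℂ → ℂ} {s : Set ℂ} (hs : IsOpen s) {x : ℂ} (hx : x ∈ s) (n : ℕ) :
    iteratedDerivWithin n f s x = iteratedDeriv n f x := by
  simp [iteratedDerivWithin, iteratedDeriv, iteratedFDerivWithin_of_isOpen n hs hx]

lemma itd_id_mul (n : ℕ) : ∀ (g : ℂ → ℂ), AnalyticOnNhd ℂ g (ball 0 1) → ∀ x ∈ ball (0:ℂ) 1,
    iteratedDeriv (n+1) (fun z => z * g z) x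
      = x * iteratedDeriv (n+1) g x + (n+1) * iteratedDeriv n g x := by
  induction n with
  | zero =>
    intro g hg x hx
    rw [iteratedDeriv_one, deriv_fun_mul (c := fun y => y) differentiableAt_id ((hg x hx).differentiableAt)]
    simp [iteratedDeriv_one]
    ring
  | succ m ih =>
    intro g hg x hx
    have hgd : AnalyticOnNhd ℂ (deriv g) (ball 0 1) := hg.deriv
    have hev : (deriv fun z => z * g z) =ᶠ[nhds x] fun z => g z + z * deriv g z := by
      filter_upwards [isOpen_ball.mem_nhds hx] with z hz
      rw [deriv_fun_mul (c := fun y => y) differentiableAt_id ((hg z hz).differentiableAt)]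
      simp
    rw [iteratedDeriv_succ', Filter.EventuallyEq.iteratedDeriv_eq _ hev]
    have hU : UniqueDiffOn ℂ (ball (0:ℂ) 1) := isOpen_ball.uniqueDiffOn
    have hadd : iteratedDeriv (m+1) (fun z => g z + z * deriv g z) x
        = iteratedDeriv (m+1) g x + iteratedDeriv (m+1) (fun z => z * deriv g z) x := by
      have h1 : (fun z => g z + z * deriv g z) = g + (fun z => z * deriv g z) := rfl
      rw [h1, ← itdw_open isOpen_ball hx, ← itdw_open isOpen_ball hx,
        ← itdw_open isOpen_ball hx,
        iteratedDerivWithin_add hx hU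
          (((hg.contDiffOn hU).of_le le_top).contDiffWithinAt hx)
          ((((analyticOnNhd_id).mul hgd).contDiffOn hU |>.of_le le_top).contDiffWithinAt hx)]
    rw [hadd, ih (deriv g) hgd x hx, ← iteratedDeriv_succ', ← iteratedDeriv_succ']
    push_cast
    ring

theorem starlike_log_coeff_bound
    (f φ : ℂ → ℂ) (γ : ℕ → ℂ)
    (hf : AnalyticOn ℂ f (ball 0 1))
    (hinj : Set.InjOn f (ball 0 1))
    (hf0 : f 0 = 0) (hf1 : deriv f 0 = 1)
    (hst : ∀ z ∈ ball (0:ℂ) 1, z ≠ 0 → 0 < (z * deriv f z / f z).re)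
    (hφ : AnalyticOn ℂ φ (ball 0 1))
    (hφ0 : φ 0 = 0)
    (hlog : ∀ z ∈ ball (0:ℂ) 1, z ≠ 0 → Complex.exp (φ z) = f z / z)
    (hγ : ∀ n, γ n = iteratedDeriv n φ 0 / (2 * (n.factorial : ℂ))) :
    ∀ n : ℕ, 1 ≤ n → ‖γ n‖ ≤ 1 / n := by
  intro n hn
  have h0mem : (0:ℂ) ∈ ball (0:ℂ) 1 := mem_ball_self one_pos
  have hφN : AnalyticOnNhd ℂ φ (ball 0 1) := (isOpen_ball.analyticOn_iff_analyticOnNhd).mp hφ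
  have hfN : AnalyticOnNhd ℂ f (ball 0 1) := (isOpen_ball.analyticOn_iff_analyticOnNhd).mp hf
  have hφd : AnalyticOnNhd ℂ (deriv φ) (ball 0 1) := hφN.deriv
  set q : ℂ → ℂ := fun z => z * deriv φ z + 1 with hqdef
  have hqA : AnalyticOnNhd ℂ q (ball 0 1) :=
    (analyticOnNhd_id.mul hφd).add analyticOnNhd_const
  have hq : DifferentiableOn ℂ q (ball 0 1) := hqA.differentiableOn
  have hq0 : q 0 = 1 := by simp [hqdef]
  have hfne : ∀ z ∈ ball (0:ℂ) 1, z ≠ 0 → f z ≠ 0 := by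
    intro z hz hz0 hfz
    have := hlog z hz hz0
    rw [hfz, zero_div] at this
    exact Complex.exp_ne_zero _ this
  have hderiv : ∀ z ∈ ball (0:ℂ) 1, z ≠ 0 → deriv φ z = deriv f z / f z - 1/z := by
    intro z hz hz0
    have hfz : f z ≠ 0 := hfne z hz hz0
    have h1 : HasDerivAt (fun w => Complex.exp (φ w))
        (Complex.exp (φ z) * deriv φ z) z :=
      (((hφN z hz).differentiableAt).hasDerivAt).cexp
    have h2 : HasDerivAt (fun w => f w / w)
        ((deriv f z * z - f z * 1) / z ^ 2) z :=
      (((hfN z hz).differentiableAt).hasDerivAt).div (hasDerivAt_id z) hz0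
    have h3 : (fun w => Complex.exp (φ w)) =ᶠ[nhds z] fun w => f w / w := by
      filter_upwards [(isOpen_ball.inter isOpen_compl_singleton).mem_nhds
        ⟨hz, by simpa using hz0⟩] with w hw
      exact hlog w hw.1 (by simpa using hw.2)
    have h1' : HasDerivAt (fun w => f w / w) (Complex.exp (φ z) * deriv φ z) z :=
      h1.congr_of_eventuallyEq h3.symm
    have huniq : Complex.exp (φ z) * deriv φ z = (deriv f z * z - f z * 1) / z ^ 2 :=
      h1'.unique h2
    rw [hlog z hz hz0] at huniq
    field_simp at huniq
    rw [div_sub_div _ _ hfz hz0, eq_div_iff (mul_ne_zero hfz hz0)]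
    apply mul_right_cancel₀ hz0
    linear_combination z * huniq
  have hqre : ∀ z ∈ ball (0:ℂ) 1, 0 ≤ (q z).re := by
    intro z hz
    rcases eq_or_ne z 0 with rfl | hz0
    · simp [hq0]
    · have hfz : f z ≠ 0 := hfne z hz hz0
      have : q z = z * deriv f z / f z := by
        rw [hqdef]
        simp only
        rw [hderiv z hz hz0]
        field_simp
        ring
      rw [this]
      exact (hst z hz hz0).le
  -- coefficient identity
  obtain ⟨m, rfl⟩ : ∃ m, n = m + 1 := ⟨n - 1, (Nat.succ_pred_eq_of_pos hn).symm⟩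
  have hcoeff : iteratedDeriv (m+1) q 0 = ((m:ℂ)+1) * iteratedDeriv (m+1) φ 0 := by
    have h1 : q = fun z => (1:ℂ) + z * deriv φ z := by funext z; simp [hqdef]; ring
    have hU : UniqueDiffOn ℂ (ball (0:ℂ) 1) := isOpen_ball.uniqueDiffOn
    rw [h1, ← itdw_open isOpen_ball h0mem,
      iteratedDerivWithin_const_add (Nat.succ_pos m) 1,
      itdw_open isOpen_ball h0mem,
      itd_id_mul m (deriv φ) hφd 0 h0mem, ← iteratedDeriv_succ', ← iteratedDeriv_succ']
    ring
  have hcar := carath hq hq0 hqre (n := m+1) (Nat.le_add_left 1 m)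
  rw [hcoeff, norm_mul] at hcar
  have habs1 : ‖(m:ℂ)+1‖ = (m:ℝ)+1 := by
    rw [show ((m:ℂ)+1) = ((m+1:ℕ):ℂ) by push_cast; ring, Complex.norm_natCast]
    push_cast; ring
  rw [habs1] at hcar
  -- conclude
  rw [hγ, norm_div]
  have h2 : ‖2 * ((m+1).factorial : ℂ)‖ = 2 * ((m+1).factorial : ℝ) := by
    rw [norm_mul, Complex.norm_two, Complex.norm_natCast]
  rw [h2]
  have hFpos : (0:ℝ) < (m+1).factorial := by positivity
  have hnpos : (0:ℝ) < (m:ℝ)+1 := by positivity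
  rw [div_le_div_iff₀ (by positivity) (by positivity)]
  push_cast
  nlinarith [norm_nonneg (iteratedDeriv (m+1) φ 0)]
end
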